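/- arXiv:0805.1272 — 4 statements merged into one kernel-verified Lean document; each statement's English description precedes it below -/
import Mathlib

section
/- For any integers m ≥ 1, n ≥ 1, any subset S of [m] = {1,2,…,m} with s = |S|, the sum over all complete (m+1)-ary trees T with n internal vertices of the product over all internal vertices v of T of (x + 1/ℍ_v^S) equals ((x+1)/n!) · ∏_{i=1}^{n-1} ((mn+i+1)(x+1) − (m−s+1)i), as an identity of polynomials in x over ℚ. -/
open Polynomial Finset

/-- A complete `m`-ary tree: a `leaf` is an external vertex and a `node`
has exactly `m` linearly ordered subtrees. -/
inductive MTree (m : ℕ) : Type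
  | leaf : MTree m
  | node : (Fin m → MTree m) → MTree m

namespace MTree

/-- The number of internal vertices of a complete `m`-ary tree. -/
def internals {m : ℕ} : MTree m → ℕ
  | leaf => 0
  | node c => 1 + ∑ i, (c i).internals

/-- The first kind of hook length of the root of `node c`: one plus the number of
internal vertices of all subtrees except the rightmost one. -/
def hook1 {m : ℕ} (c : Fin m → MTree m) : ℕ :=
  1 + ∑ i ∈ Finset.univ.filter (fun i : Fin m => (i : ℕ) + 1 < m), (c i).internals

/-- The product of `f (𝓗_v)` over all internal vertices `v` of a complete `m`-ary
tree, where `𝓗_v` is the first kind of hook length. -/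
def hookProd1 {m : ℕ} {R : Type*} [CommSemiring R] (f : ℕ → R) : MTree m → R
  | leaf => 1
  | node c => f (hook1 c) * ∏ i, hookProd1 f (c i)

/-- The number of internal vertices of the `(m+1-|S|)`-ary tree `T^S` obtained from a
complete `(m+1)`-ary tree `T` by recursively deleting, for every `r ∈ S ⊆ [m]`,
the `r`-th subtree of every remaining internal vertex (the label `r ∈ {1,…,m}`
corresponds to the child with index `r - 1`, i.e. to `Fin.castSucc` of `Fin m`). -/
def internalsS {m : ℕ} (S : Finset (Fin m)) : MTree (m + 1) → ℕ
  | leaf => 0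
  | node c => 1 + ∑ i ∈ (S.image Fin.castSucc)ᶜ, internalsS S (c i)

/-- The product of `f (ℍ_v^S)` over all internal vertices `v` of a complete
`(m+1)`-ary tree, where `ℍ_v^S` is the second kind of hook length. -/
def hookProdS {m : ℕ} {R : Type*} [CommSemiring R] (S : Finset (Fin m)) (f : ℕ → R) :
    MTree (m + 1) → R
  | leaf => 1
  | node c => f (internalsS S (node c)) * ∏ i, hookProdS S f (c i)

end MTree

namespace HLF

variable {F : Type*} [Field F] [CharZero F]

/-- `Cpoly t n` is the polynomial (in `r`) `r (tn+r-1)(tn+r-2)⋯(tn+r-n+1)/n!`. -/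
noncomputable def Cpoly (t : F) (n : ℕ) : Polynomial F :=
  if n = 0 then 1 else
    C ((n.factorial : F)⁻¹) * X * ∏ j ∈ range (n - 1), (X + C (t * n - 1 - j))

noncomputable def cc (t : F) (n : ℕ) (r : F) : F := (Cpoly t n).eval r

@[simp] lemma cc_zero (t r : F) : cc t 0 r = 1 := by simp [cc, Cpoly]

lemma cc_eq (t : F) {n : ℕ} (hn : n ≠ 0) (r : F) :
    cc t n r = (n.factorial : F)⁻¹ * r * ∏ j ∈ range (n - 1), (r + (t * n - 1 - j)) := by
  simp [cc, Cpoly, hn, eval_prod]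

@[simp] lemma cc_zero_right (t : F) {n : ℕ} (hn : n ≠ 0) : cc t n 0 = 0 := by
  simp [cc_eq t hn]

lemma cc_eq' (t : F) {n : ℕ} (hn : n ≠ 0) (r : F) :
    cc t n r = (n.factorial : F)⁻¹ * r * ∏ j ∈ range (n - 1), (r + t * n - 1 - j) := by
  rw [cc_eq t hn]
  congr 1
  apply Finset.prod_congr rfl
  intro j _
  ring

lemma prod_shift (a : F) (k : ℕ) :
    ∏ j ∈ range (k+1), (a - j) = a * ∏ j ∈ range k, (a - 1 - j) := by
  rw [Finset.prod_range_succ']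
  have h : ∀ j ∈ range k, (a - (((j+1) : ℕ) : F)) = a - 1 - j := by
    intro j _
    push_cast
    ring
  rw [Finset.prod_congr rfl h]
  push_cast
  ring

lemma aux_div (c1 κ P r a u v : F) (hc1 : c1 ≠ 0) (hκ : κ ≠ 0)
    (key : r * a = (r - 1) * u + κ * v) :
    (κ*c1)⁻¹ * r * (a*P) = (κ*c1)⁻¹ * (r-1) * (P*u) + c1⁻¹ * v * P := by
  have h := mul_ne_zero hκ hc1
  field_simp
  linear_combination (P) * key

lemma pascal (t : F) {n : ℕ} (hn : n ≠ 0) (r : F) :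
    cc t n r = cc t n (r - 1) + cc t (n - 1) (r + t - 1) := by
  rcases Nat.lt_or_ge n 2 with h2 | h2
  · interval_cases n
    · exact absurd rfl hn
    · rw [cc_eq' t one_ne_zero, cc_eq' t one_ne_zero]
      simp
  · obtain ⟨k, rfl⟩ : ∃ k, n = k + 2 := ⟨n - 2, by omega⟩
    have hk1 : (k + 2 : ℕ) - 1 = k + 1 := rfl
    have hk2 : (k + 2 : ℕ) - 1 - 1 = k := rfl
    set a : F := r + t * ((k+2 : ℕ) : F) - 1 with ha
    have h1 : cc t (k+2) r
        = ((k+2).factorial : F)⁻¹ * r * (a * ∏ j ∈ range k, (a - 1 - j)) := by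
      rw [cc_eq' t (by omega) r, hk1, prod_shift]
    have h2' : cc t (k+2) (r-1)
        = ((k+2).factorial : F)⁻¹ * (r-1) * ((∏ j ∈ range k, (a - 1 - j)) * (a - 1 - k)) := by
      rw [cc_eq' t (by omega) (r-1), hk1]
      have hfac' : ∀ j ∈ range (k+1), (r - 1 + t * ((k+2:ℕ):F) - 1 - (j:F)) = a - 1 - j := by
        intro j _
        rw [ha]
        ring
      rw [Finset.prod_congr rfl hfac', Finset.prod_range_succ]
    have h3 : cc t (k+1) (r + t - 1)
        = ((k+1).factorial : F)⁻¹ * (r+t-1) * ∏ j ∈ range k, (a - 1 - j) := by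
      rw [cc_eq' t (by omega) (r+t-1)]
      have hr : (k + 1 : ℕ) - 1 = k := rfl
      rw [hr]
      congr 1
      apply Finset.prod_congr rfl
      intro j _
      rw [ha]
      push_cast
      ring
    show cc t (k+2) r = cc t (k+2) (r-1) + cc t (k+2-1) (r + t - 1)
    rw [show (k+2-1 : ℕ) = k + 1 from rfl]
    rw [h1, h2', h3]
    have hfac : ((k+2).factorial : F) = ((k+2 : ℕ) : F) * ((k+1).factorial : F) := by
      rw [show (k+2 : ℕ) = (k+1) + 1 from rfl, Nat.factorial_succ]
      push_cast
      ring
    have hne : ((k+2).factorial : F) ≠ 0 := Nat.cast_ne_zero.2 (Nat.factorial_ne_zero _)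
    have hne' : ((k+1).factorial : F) ≠ 0 := Nat.cast_ne_zero.2 (Nat.factorial_ne_zero _)
    have key : r * a = (r-1) * (a - 1 - k) + (((k+2):ℕ) : F) * (r + t - 1) := by
      rw [ha]
      push_cast
      ring
    have hK : (((k+2):ℕ) : F) ≠ 0 := Nat.cast_ne_zero.2 (by omega)
    rw [hfac]
    exact aux_div _ _ _ _ _ _ _ hne' hK key

lemma const_of_shift (D : Polynomial F) (h : ∀ y : F, D.eval y = D.eval (y - 1)) :
    ∀ y : F, D.eval y = D.eval 0 := by
  have hnat : ∀ k : ℕ, D.eval (k : F) = D.eval 0 := by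
    intro k
    induction k with
    | zero => simp
    | succ k ih =>
      have h2 := h ((k : F) + 1)
      simp only [add_sub_cancel_right] at h2
      push_cast
      rw [h2, ih]
  have hzero : D - C (D.eval 0) = 0 := by
    apply Polynomial.eq_zero_of_infinite_isRoot
    apply Set.infinite_of_injective_forall_mem (f := (Nat.cast : ℕ → F)) Nat.cast_injective
    intro k
    simp [Polynomial.IsRoot, hnat k]
  intro y
  have h3 := congrArg (Polynomial.eval y) hzero
  simpa [sub_eq_zero] using h3

/-- The master convolution lemma (a Hagen–Rothe-type identity). -/
lemma master (q σ : F) : ∀ (n : ℕ) (y r' : F),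
    ∑ kj ∈ Finset.HasAntidiagonal.antidiagonal n, cc (q - σ) kj.1 y * cc q kj.2 (σ * kj.1 + r')
      = cc q n (y + r') := by
  intro n
  induction n with
  | zero => intro y r'; simp
  | succ n ih =>
    intro y r'
    set Dp : Polynomial F :=
      (∑ kj ∈ Finset.HasAntidiagonal.antidiagonal (n+1),
        Cpoly (q - σ) kj.1 * C (cc q kj.2 (σ * kj.1 + r')))
      - (Cpoly q (n+1)).comp (X + C r') with hDp
    have hev : ∀ z : F, Dp.eval z =
        (∑ kj ∈ Finset.HasAntidiagonal.antidiagonal (n+1), cc (q-σ) kj.1 z * cc q kj.2 (σ * kj.1 + r'))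
          - cc q (n+1) (z + r') := by
      intro z
      simp only [hDp, eval_sub, eval_finset_sum, eval_mul, eval_C, eval_comp, eval_add,
        eval_X, cc]
    have hshift : ∀ z : F, Dp.eval z = Dp.eval (z - 1) := by
      intro z
      rw [hev, hev]
      have lhs_split :
          ∑ kj ∈ Finset.HasAntidiagonal.antidiagonal (n+1), cc (q-σ) kj.1 z * cc q kj.2 (σ * kj.1 + r')
          = (∑ kj ∈ Finset.HasAntidiagonal.antidiagonal (n+1), cc (q-σ) kj.1 (z-1) * cc q kj.2 (σ * kj.1 + r'))
            + cc q n (z + r' + q - 1) := by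
        rw [Finset.Nat.sum_antidiagonal_succ, Finset.Nat.sum_antidiagonal_succ]
        have hterm : ∀ kj : ℕ × ℕ, kj ∈ Finset.HasAntidiagonal.antidiagonal n →
            cc (q-σ) (kj.1+1) z * cc q kj.2 (σ * ((kj.1+1 : ℕ) : F) + r')
            = cc (q-σ) (kj.1+1) (z-1) * cc q kj.2 (σ * ((kj.1+1 : ℕ) : F) + r')
              + cc (q-σ) kj.1 (z + (q-σ) - 1) * cc q kj.2 (σ * kj.1 + (σ + r')) := by
          intro kj _
          have hp := pascal (q-σ) (Nat.succ_ne_zero kj.1) z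
          simp only [Nat.add_sub_cancel, Nat.succ_sub_one] at hp
          rw [hp, add_mul]
          congr 3
          push_cast
          ring
        rw [Finset.sum_congr rfl hterm, Finset.sum_add_distrib,
          ih (z + (q-σ) - 1) (σ + r')]
        have harg : z + (q - σ) - 1 + (σ + r') = z + r' + q - 1 := by ring
        rw [harg]
        simp only [cc_zero]
        ring
      have rhs_split : cc q (n+1) (z + r') =
          cc q (n+1) (z - 1 + r') + cc q n (z + r' + q - 1) := by
        have hp := pascal q (Nat.succ_ne_zero n) (z + r')
        simp only [Nat.succ_eq_add_one, Nat.add_sub_cancel] at hp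
        have h1 : z + r' - 1 = z - 1 + r' := by ring
        rw [hp, h1]
      rw [lhs_split, rhs_split]
      ring
    have h0 : Dp.eval 0 = 0 := by
      rw [hev]
      rw [Finset.Nat.sum_antidiagonal_succ]
      have hz : ∀ kj : ℕ × ℕ, kj ∈ Finset.HasAntidiagonal.antidiagonal n →
          cc (q-σ) (kj.1+1) (0:F) * cc q kj.2 (σ * ((kj.1+1:ℕ):F) + r') = 0 := by
        intro kj _
        rw [cc_zero_right (q-σ) (Nat.succ_ne_zero _)]
        ring
      rw [Finset.sum_congr rfl hz]
      simp
    have hc := const_of_shift Dp hshift y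
    rw [h0] at hc
    have h4 : (∑ kj ∈ Finset.HasAntidiagonal.antidiagonal (n+1),
        cc (q-σ) kj.1 y * cc q kj.2 (σ * kj.1 + r')) - cc q (n+1) (y + r') = 0 := by
      rw [← hev y]; exact hc
    exact sub_eq_zero.mp h4

end HLF

namespace HLF

abbrev K : Type := RatFunc ℚ

instance : CharZero K := by
  constructor
  intro a b h
  have hinj : Function.Injective (algebraMap (Polynomial ℚ) K) :=
    RatFunc.algebraMap_injective ℚ
  have h2 : (algebraMap (Polynomial ℚ) K) ((a : Polynomial ℚ))
      = (algebraMap (Polynomial ℚ) K) ((b : Polynomial ℚ)) := by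
    simpa [map_natCast] using h
  exact Nat.cast_injective (hinj h2)

end HLF

namespace HLF

open MTree

/-- Decidable equality of complete `μ`-ary trees. -/
def treeDecEq {μ : ℕ} : (a b : MTree μ) → Decidable (a = b)
  | .leaf, .leaf => .isTrue rfl
  | .leaf, .node _ => .isFalse nofun
  | .node _, .leaf => .isFalse nofun
  | .node c, .node d =>
    have inst : ∀ i, Decidable (c i = d i) := fun i => treeDecEq (c i) (d i)
    decidable_of_iff (∀ i, c i = d i)
      ⟨fun h => by rw [MTree.node.injEq]; exact funext h,
       fun h i => by rw [MTree.node.injEq] at h; exact congrFun h i⟩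

instance {μ : ℕ} : DecidableEq (MTree μ) := treeDecEq

noncomputable section Trees

variable (m : ℕ) (S : Finset (Fin m))

/-- The finset of all `(m+1)`-ary trees of "depth" at most `N`;
it contains all trees with at most `N` internal vertices. -/
def treesLE : ℕ → Finset (MTree (m+1))
  | 0 => {MTree.leaf}
  | (N+1) => insert MTree.leaf
      ((Fintype.piFinset (fun _ : Fin (m+1) => treesLE N)).image MTree.node)

lemma treesLE_succ_mono (N : ℕ) : treesLE m N ⊆ treesLE m (N+1) := by
  induction N with
  | zero =>
    intro T hT
    simp only [treesLE, Finset.mem_singleton] at hT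
    simp [treesLE, hT]
  | succ N ih =>
    show treesLE m (N+1) ⊆ treesLE m (N+2)
    simp only [treesLE]
    apply Finset.insert_subset_insert
    apply Finset.image_subset_image
    exact Fintype.piFinset_subset _ _ (fun _ => ih)

lemma treesLE_mono {M N : ℕ} (h : M ≤ N) : treesLE m M ⊆ treesLE m N := by
  induction N, h using Nat.le_induction with
  | base => exact Finset.Subset.refl _
  | succ N _ ih => exact ih.trans (treesLE_succ_mono m N)

lemma mem_treesLE_internals : ∀ T : MTree (m+1), T ∈ treesLE m T.internals := by
  intro T
  induction T with
  | leaf => simp [treesLE, MTree.internals]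
  | node c ih =>
    have hint : (MTree.node c).internals = (∑ i, (c i).internals) + 1 := by
      rw [MTree.internals]; omega
    rw [hint]
    simp only [treesLE]
    apply Finset.mem_insert_of_mem
    apply Finset.mem_image_of_mem
    rw [Fintype.mem_piFinset]
    intro i
    exact treesLE_mono m (Finset.single_le_sum (fun j _ => Nat.zero_le _) (Finset.mem_univ i))
      (ih i)

/-- The finset of trees with exactly `n` internal vertices. -/
def TF (n : ℕ) : Finset (MTree (m+1)) :=
  (treesLE m n).filter (fun T => T.internals = n)

lemma mem_TF {n : ℕ} {T : MTree (m+1)} : T ∈ TF m n ↔ T.internals = n := by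
  constructor
  · intro h; exact (Finset.mem_filter.mp h).2
  · intro h
    exact Finset.mem_filter.mpr ⟨h ▸ mem_treesLE_internals m T, h⟩

lemma internalsS_le_internals : ∀ T : MTree (m+1), internalsS S T ≤ T.internals := by
  intro T
  induction T with
  | leaf => simp [MTree.internalsS, MTree.internals]
  | node c ih =>
    rw [MTree.internalsS, MTree.internals]
    have h1 : ∑ i ∈ (S.image Fin.castSucc)ᶜ, internalsS S (c i)
        ≤ ∑ i ∈ (S.image Fin.castSucc)ᶜ, (c i).internals :=
      Finset.sum_le_sum (fun i _ => ih i)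
    have h2 : ∑ i ∈ (S.image Fin.castSucc)ᶜ, (c i).internals
        ≤ ∑ i, (c i).internals :=
      Finset.sum_le_sum_of_subset (Finset.subset_univ _)
    omega

/-! ### Weights -/

/-- The hook weight of a tree, in `ℚ[X]`. -/
def wQ : MTree (m+1) → Polynomial ℚ :=
  MTree.hookProdS S (fun h => (Polynomial.X : Polynomial ℚ) + Polynomial.C ((h : ℚ)⁻¹))

/-- The canonical map `ℚ[X] → ℚ(X)`. -/
def φ : Polynomial ℚ →+* K := algebraMap (Polynomial ℚ) K

/-- The image of the variable `x`. -/
def ξ : K := φ Polynomial.X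

def wK (T : MTree (m+1)) : K := φ (wQ m S T)

/-- the big ring `K[z][u]` -/
abbrev R2 : Type := Polynomial (Polynomial K)

/-- weight of a tree marked by `u^(internalsS T) z^(internals T - internalsS T)` -/
def ω (T : MTree (m+1)) : R2 :=
  Polynomial.monomial (internalsS S T)
    (Polynomial.monomial (T.internals - internalsS S T) (wK m S T))

/-- weight of a tree marked by `z^(internals T)` only -/
def ϖ (T : MTree (m+1)) : R2 :=
  Polynomial.C (Polynomial.monomial T.internals (wK m S T))

def Φ (N : ℕ) : R2 := ∑ T ∈ treesLE m N, ω m S T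

def Ψ (N : ℕ) : R2 := ∑ T ∈ treesLE m N, ϖ m S T

/-- The refined sum `Â k d`: total weight of trees with `internalsS = k` and
`internals = k + d`. -/
def Ahat (k d : ℕ) : K :=
  ∑ T ∈ (TF m (k+d)).filter (fun T => internalsS S T = k), wK m S T

/-- Total weight of trees with `n` internal vertices. -/
def PP (n : ℕ) : K := ∑ T ∈ TF m n, wK m S T

lemma coeff_Phi {N k d : ℕ} (h : k + d ≤ N) :
    ((Φ m S N).coeff k).coeff d = Ahat m S k d := by
  have e1 : ∀ T : MTree (m+1),
      ((ω m S T).coeff k).coeff d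
      = if internalsS S T = k ∧ T.internals - internalsS S T = d then wK m S T else 0 := by
    intro T
    by_cases h1 : internalsS S T = k
    · rw [ω, Polynomial.coeff_monomial, if_pos h1, Polynomial.coeff_monomial]
      by_cases h2 : T.internals - internalsS S T = d
      · rw [if_pos h2, if_pos ⟨h1, h2⟩]
      · rw [if_neg h2, if_neg (fun hc => h2 hc.2)]
    · rw [ω, Polynomial.coeff_monomial, if_neg h1, Polynomial.coeff_zero,
        if_neg (fun hc => h1 hc.1)]
  rw [Φ, Polynomial.finset_sum_coeff, Polynomial.finset_sum_coeff,
    Finset.sum_congr rfl (fun T _ => e1 T), ← Finset.sum_filter, Ahat]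
  apply Finset.sum_congr ?_ (fun _ _ => rfl)
  ext T
  simp only [Finset.mem_filter, mem_TF]
  constructor
  · rintro ⟨hmem, h1, h2⟩
    have h3 := internalsS_le_internals m S T
    exact ⟨by omega, h1⟩
  · rintro ⟨h1, h2⟩
    have h3 := internalsS_le_internals m S T
    exact ⟨treesLE_mono m (show T.internals ≤ N by omega) (mem_treesLE_internals m T),
      h2, by omega⟩

lemma coeff_Psi0 {N n : ℕ} (h : n ≤ N) :
    ((Ψ m S N).coeff 0).coeff n = PP m S n := by
  have e1 : ∀ T : MTree (m+1),
      ((ϖ m S T).coeff 0).coeff n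
      = if T.internals = n then wK m S T else 0 := by
    intro T
    rw [ϖ, Polynomial.coeff_C_zero, Polynomial.coeff_monomial]
  rw [Ψ, Polynomial.finset_sum_coeff, Polynomial.finset_sum_coeff,
    Finset.sum_congr rfl (fun T _ => e1 T), ← Finset.sum_filter, PP]
  apply Finset.sum_congr ?_ (fun _ _ => rfl)
  ext T
  simp only [Finset.mem_filter, mem_TF]
  constructor
  · rintro ⟨_, h1⟩
    exact h1
  · intro h1
    exact ⟨treesLE_mono m (show T.internals ≤ N by omega) (mem_treesLE_internals m T), h1⟩

lemma coeff_Psi_pos {N e : ℕ} (he : e ≠ 0) : (Ψ m S N).coeff e = 0 := by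
  rw [Ψ, Polynomial.finset_sum_coeff]
  apply Finset.sum_eq_zero
  intro T _
  rw [ϖ, Polynomial.coeff_C, if_neg he]

/-! ### The recursion for `Φ` -/

/-- the "integration" operator scaling the coefficient of `u^k` by `1/k`. -/
def J (P : R2) : R2 :=
  P.sum fun k a => Polynomial.monomial k (Polynomial.C ((k : K))⁻¹ * a)

lemma J_coeff (P : R2) (k : ℕ) :
    (J P).coeff k = Polynomial.C ((k : K))⁻¹ * P.coeff k := by
  classical
  rw [J, Polynomial.sum_def, Polynomial.finset_sum_coeff]
  simp only [Polynomial.coeff_monomial]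
  rw [Finset.sum_ite_eq' P.support k
    (fun k' => Polynomial.C ((k' : K))⁻¹ * P.coeff k')]
  by_cases h : k ∈ P.support
  · rw [if_pos h]
  · rw [if_neg h, Polynomial.notMem_support_iff.mp h, mul_zero]

lemma J_sum {ι : Type*} (s : Finset ι) (f : ι → R2) :
    J (∑ i ∈ s, f i) = ∑ i ∈ s, J (f i) := by
  apply Polynomial.ext
  intro k
  rw [J_coeff, Polynomial.finset_sum_coeff, Polynomial.finset_sum_coeff, Finset.mul_sum]
  exact Finset.sum_congr rfl (fun i _ => (J_coeff (f i) k).symm)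

lemma prod_monomial {A : Type*} [CommSemiring A] {ι : Type*} (s : Finset ι)
    (g : ι → ℕ) (v : ι → A) :
    ∏ i ∈ s, Polynomial.monomial (g i) (v i)
      = Polynomial.monomial (∑ i ∈ s, g i) (∏ i ∈ s, v i) := by
  classical
  induction s using Finset.cons_induction with
  | empty => simp [Polynomial.monomial_zero_one]
  | cons a s ha ih =>
    rw [Finset.prod_cons, ih, Finset.sum_cons, Finset.prod_cons,
      Polynomial.monomial_mul_monomial]

def Mc (c : Fin (m+1) → MTree (m+1)) : R2 :=
  Polynomial.X * ∏ i,
    (if i ∈ (S.image Fin.castSucc)ᶜ then ω m S (c i) else ϖ m S (c i))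

def Θ (N : ℕ) : R2 :=
  Polynomial.X * ((Φ m S N) ^ (m+1-S.card) * (Ψ m S N) ^ S.card)

lemma card_kept : ((S.image Fin.castSucc)ᶜ : Finset (Fin (m+1))).card = m + 1 - S.card := by
  rw [Finset.card_compl, Finset.card_image_of_injective _ (Fin.castSucc_injective m)]
  simp

lemma wK_node (c : Fin (m+1) → MTree (m+1)) :
    wK m S (MTree.node c)
      = (ξ + ((internalsS S (MTree.node c) : K))⁻¹) * ∏ i, wK m S (c i) := by
  have h1 : wQ m S (MTree.node c)
      = (Polynomial.X + Polynomial.C (((internalsS S (MTree.node c) : ℚ))⁻¹))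
        * ∏ i, wQ m S (c i) := rfl
  rw [wK, h1, map_mul, map_add, map_prod]
  congr 1
  rw [ξ]
  congr 1
  rw [φ]
  rw [RatFunc.algebraMap_C, map_inv₀, map_natCast]

lemma Mc_eq (c : Fin (m+1) → MTree (m+1)) :
    Mc m S c = Polynomial.monomial (internalsS S (MTree.node c))
      (Polynomial.monomial
        ((MTree.node c).internals - internalsS S (MTree.node c))
        (∏ i, wK m S (c i))) := by
  have hfac : ∀ i : Fin (m+1),
      (if i ∈ (S.image Fin.castSucc)ᶜ then ω m S (c i) else ϖ m S (c i))
      = Polynomial.monomial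
          (if i ∈ (S.image Fin.castSucc)ᶜ then internalsS S (c i) else 0)
          (Polynomial.monomial
            (if i ∈ (S.image Fin.castSucc)ᶜ then
              (c i).internals - internalsS S (c i) else (c i).internals)
            (wK m S (c i))) := by
    intro i
    by_cases h : i ∈ (S.image Fin.castSucc)ᶜ
    · rw [if_pos h, if_pos h, if_pos h, ω]
    · rw [if_neg h, if_neg h, if_neg h, ϖ, Polynomial.monomial_zero_left]
  rw [Mc, Finset.prod_congr rfl (fun i _ => hfac i), prod_monomial]
  rw [Finset.prod_congr rfl
    (fun (i : Fin (m+1)) _ => rfl :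
      ∀ i ∈ Finset.univ, (Polynomial.monomial
            (if i ∈ (S.image Fin.castSucc)ᶜ then
              (c i).internals - internalsS S (c i) else (c i).internals)
            (wK m S (c i))) = _)]
  rw [prod_monomial]
  rw [← Polynomial.monomial_one_one_eq_X, Polynomial.monomial_mul_monomial, one_mul]
  have hexp1 : (1 + ∑ i : Fin (m+1),
      (if i ∈ (S.image Fin.castSucc)ᶜ then internalsS S (c i) else 0))
      = internalsS S (MTree.node c) := by
    rw [Finset.sum_ite_mem, Finset.univ_inter, MTree.internalsS]
  have hexp2 : (∑ i : Fin (m+1), (if i ∈ (S.image Fin.castSucc)ᶜ then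
        (c i).internals - internalsS S (c i) else (c i).internals))
      = (MTree.node c).internals - internalsS S (MTree.node c) := by
    rw [Finset.sum_ite]
    have hA : Finset.univ.filter (fun i : Fin (m+1) => i ∈ (S.image Fin.castSucc)ᶜ)
        = (S.image Fin.castSucc)ᶜ := by
      ext i; simp
    have hB : Finset.univ.filter (fun i : Fin (m+1) => ¬ i ∈ (S.image Fin.castSucc)ᶜ)
        = (S.image Fin.castSucc) := by
      ext i; simp
    rw [hA, hB]
    have h1 : ∑ i ∈ (S.image Fin.castSucc)ᶜ, ((c i).internals - internalsS S (c i))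
        = ∑ i ∈ (S.image Fin.castSucc)ᶜ, (c i).internals
          - ∑ i ∈ (S.image Fin.castSucc)ᶜ, internalsS S (c i) :=
      Finset.sum_tsub_distrib _ (fun i _ => internalsS_le_internals m S (c i))
    have h2 : (∑ i ∈ (S.image Fin.castSucc)ᶜ, (c i).internals)
        + ∑ i ∈ (S.image Fin.castSucc), (c i).internals = ∑ i, (c i).internals := by
      exact Finset.sum_compl_add_sum _ _
    have h3 : ∑ i ∈ (S.image Fin.castSucc)ᶜ, internalsS S (c i)
        ≤ ∑ i ∈ (S.image Fin.castSucc)ᶜ, (c i).internals :=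
      Finset.sum_le_sum (fun i _ => internalsS_le_internals m S (c i))
    rw [MTree.internalsS, MTree.internals]
    omega
  rw [hexp1, hexp2]

lemma omega_node (c : Fin (m+1) → MTree (m+1)) :
    ω m S (MTree.node c)
      = Polynomial.C (Polynomial.C ξ) * Mc m S c + J (Mc m S c) := by
  set k := internalsS S (MTree.node c) with hk
  set dd := (MTree.node c).internals - internalsS S (MTree.node c) with hdd
  set Pw := ∏ i, wK m S (c i) with hPw
  have hMc := Mc_eq m S c
  rw [ω, wK_node, hMc]
  rw [Polynomial.C_mul_monomial, Polynomial.C_mul_monomial]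
  have hJ : J (Polynomial.monomial k (Polynomial.monomial dd Pw))
      = Polynomial.monomial k (Polynomial.C ((k : K))⁻¹ * Polynomial.monomial dd Pw) := by
    rw [J]
    apply Polynomial.sum_monomial_index
    simp
  rw [hJ, Polynomial.C_mul_monomial, ← LinearMap.map_add, ← LinearMap.map_add]
  congr 2
  ring

lemma sum_Mc (N : ℕ) :
    ∑ c ∈ Fintype.piFinset (fun _ : Fin (m+1) => treesLE m N), Mc m S c = Θ m S N := by
  rw [Θ]
  simp only [Mc]
  rw [← Finset.mul_sum]
  congr 1
  have hps := Finset.prod_univ_sum (fun _ : Fin (m+1) => treesLE m N)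
    (fun i T => if i ∈ (S.image Fin.castSucc)ᶜ then ω m S T else ϖ m S T)
  rw [← hps]
  have h1 : ∀ i : Fin (m+1),
      (∑ T ∈ treesLE m N, if i ∈ (S.image Fin.castSucc)ᶜ then ω m S T else ϖ m S T)
      = if i ∈ (S.image Fin.castSucc)ᶜ then Φ m S N else Ψ m S N := by
    intro i
    by_cases h : i ∈ (S.image Fin.castSucc)ᶜ
    · simp only [if_pos h]; rfl
    · simp only [if_neg h]; rfl
  rw [Finset.prod_congr rfl (fun i _ => h1 i), Finset.prod_ite,
    Finset.prod_const, Finset.prod_const]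
  have hA : Finset.univ.filter (fun i : Fin (m+1) => i ∈ (S.image Fin.castSucc)ᶜ)
      = (S.image Fin.castSucc)ᶜ := by
    ext i; simp
  have hB : Finset.univ.filter (fun i : Fin (m+1) => ¬ i ∈ (S.image Fin.castSucc)ᶜ)
      = (S.image Fin.castSucc) := by
    ext i; simp
  rw [hA, hB, card_kept, Finset.card_image_of_injective _ (Fin.castSucc_injective m)]

lemma omega_leaf : ω m S MTree.leaf = 1 := by
  have h1 : wK m S MTree.leaf = 1 := by
    rw [wK]
    have : wQ m S MTree.leaf = 1 := rfl
    rw [this, map_one]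
  rw [ω]
  have h2 : internalsS S (MTree.leaf : MTree (m+1)) = 0 := rfl
  have h3 : (MTree.leaf : MTree (m+1)).internals = 0 := rfl
  rw [h2, h3, h1]
  simp [Polynomial.monomial_zero_one]

lemma Phi_succ (N : ℕ) :
    Φ m S (N+1) = 1 + Polynomial.C (Polynomial.C ξ) * Θ m S N + J (Θ m S N) := by
  have hleaf : (MTree.leaf : MTree (m+1)) ∉
      (Fintype.piFinset (fun _ : Fin (m+1) => treesLE m N)).image MTree.node := by
    simp only [Finset.mem_image]
    rintro ⟨c, _, hc⟩
    cases hc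
  have hinj : Set.InjOn MTree.node
      ((Fintype.piFinset (fun _ : Fin (m+1) => treesLE m N)) : Set (Fin (m+1) → MTree (m+1))) := by
    intro a _ b _ h
    rwa [MTree.node.injEq] at h
  rw [Φ]
  show ∑ T ∈ insert MTree.leaf
      ((Fintype.piFinset (fun _ : Fin (m+1) => treesLE m N)).image MTree.node),
      ω m S T = _
  rw [Finset.sum_insert hleaf, Finset.sum_image (fun a ha b hb h => hinj ha hb h)]
  rw [Finset.sum_congr rfl (fun c _ => omega_node m S c), Finset.sum_add_distrib,
    ← Finset.mul_sum, ← J_sum, sum_Mc, omega_leaf]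
  ring

/-! ### The closed forms -/

def A0 : K := ((m - S.card : ℕ) : K) - ξ

def p0 : K := (ξ + 1) / A0 m S

def q0 : K := ((m - S.card : ℕ) : K) * p0 m S

def qb : K := (m : K) * p0 m S

lemma card_le : S.card ≤ m := by
  have h := Finset.card_le_univ S
  simpa using h

lemma A0_ne : A0 m S ≠ 0 := by
  have h1 : A0 m S = φ (((m - S.card : ℕ) : Polynomial ℚ) - Polynomial.X) := by
    rw [A0, ξ, φ, map_sub, map_natCast]
  rw [h1]
  intro h
  have h2 : ((m - S.card : ℕ) : Polynomial ℚ) - Polynomial.X = 0 := by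
    apply RatFunc.algebraMap_injective ℚ
    rw [← φ, h, map_zero]
  have h3 := congrArg (fun p => Polynomial.coeff p 1) h2
  simp at h3

lemma A0_mul_p0 : A0 m S * p0 m S = ξ + 1 := by
  rw [p0, mul_div_cancel₀ _ (A0_ne m S)]

lemma q0_eq : qb m S - (S.card : K) * p0 m S = q0 m S := by
  rw [q0, qb, Nat.cast_sub (card_le m S)]
  ring

lemma cc_one (t r : K) : cc t 1 r = r := by
  rw [cc_eq' t one_ne_zero]
  simp

/-- the key local identity relating `cc q0 k p0` to `cc q0 (k-1) (b·p0)` -/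
lemma I1 {k : ℕ} (hk : k ≠ 0) :
    (ξ + ((k : K))⁻¹) * cc (q0 m S) (k-1) (((m+1-S.card : ℕ) : K) * p0 m S)
      = A0 m S * cc (q0 m S) k (p0 m S) := by
  have hb : ((m+1-S.card : ℕ) : K) = ((m - S.card : ℕ) : K) + 1 := by
    have h0 : m + 1 - S.card = (m - S.card) + 1 := by
      have := card_le m S; omega
    rw [h0]
    push_cast
    ring
  match k, hk with
  | 1, _ =>
    simp only [show (1:ℕ)-1 = 0 from rfl, cc_zero, cc_one, mul_one, Nat.cast_one, inv_one]
    rw [← A0_mul_p0 m S]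
  | (j+2), _ =>
    have h1 : cc (q0 m S) (j+2) (p0 m S)
        = ((j+2).factorial : K)⁻¹ * p0 m S *
          ((∏ i ∈ range j, (p0 m S + q0 m S * ((j+2 : ℕ) : K) - 1 - i)) *
            (p0 m S + q0 m S * ((j+2 : ℕ) : K) - 1 - (j : K))) := by
      rw [cc_eq' _ (by omega)]
      have hr : (j+2 : ℕ) - 1 = j + 1 := rfl
      rw [hr, Finset.prod_range_succ]
    have h2 : cc (q0 m S) (j+1) (((m+1-S.card : ℕ) : K) * p0 m S)
        = ((j+1).factorial : K)⁻¹ * (((m+1-S.card : ℕ) : K) * p0 m S) *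
          ∏ i ∈ range j, (p0 m S + q0 m S * ((j+2 : ℕ) : K) - 1 - i) := by
      rw [cc_eq' _ (by omega)]
      have hr : (j+1 : ℕ) - 1 = j := rfl
      rw [hr]
      congr 1
      apply Finset.prod_congr rfl
      intro i _
      rw [hb, q0]
      push_cast
      ring
    have hr2 : (j+2 : ℕ) - 1 = j + 1 := rfl
    rw [hr2, h1, h2]
    have hfac : ((j+2).factorial : K) = ((j+2 : ℕ) : K) * ((j+1).factorial : K) := by
      rw [show (j+2 : ℕ) = (j+1) + 1 from rfl, Nat.factorial_succ]
      push_cast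
      ring
    have hne' : ((j+1).factorial : K) ≠ 0 := Nat.cast_ne_zero.2 (Nat.factorial_ne_zero _)
    have hK : (((j+2) : ℕ) : K) ≠ 0 := Nat.cast_ne_zero.2 (by omega)
    have hkey0 : A0 m S * (p0 m S + q0 m S * ((j+2 : ℕ) : K) - 1 - (j : K))
        = (((m - S.card : ℕ) : K) + 1) * (((j+2 : ℕ) : K) * ξ + 1) := by
      have hA0p0 := A0_mul_p0 m S
      rw [A0] at hA0p0 ⊢
      rw [q0]
      push_cast at hA0p0 ⊢
      linear_combination ((1:K) + ((m - S.card : ℕ) : K) * ((j : K)+2)) * hA0p0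
    have key : (ξ + (((j+2) : ℕ) : K)⁻¹) * (((m+1-S.card : ℕ) : K) * p0 m S)
          * ((j+1).factorial : K)⁻¹
        = A0 m S * (((j+2).factorial : K)⁻¹ * p0 m S *
            (p0 m S + q0 m S * ((j+2 : ℕ) : K) - 1 - (j : K))) := by
      have hsplit : ξ + (((j+2) : ℕ) : K)⁻¹
          = (((j+2) : ℕ) : K)⁻¹ * ((((j+2) : ℕ) : K) * ξ + 1) := by
        rw [mul_add, ← mul_assoc, inv_mul_cancel₀ hK, one_mul, mul_one, add_comm]
      rw [hfac, hsplit, hb, mul_inv]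
      linear_combination
        (-((((j+2) : ℕ) : K)⁻¹ * (((j+1).factorial : K))⁻¹ * p0 m S)) * hkey0
    calc (ξ + (((j+2) : ℕ) : K)⁻¹) * (((j+1).factorial : K)⁻¹
            * (((m+1-S.card : ℕ) : K) * p0 m S) *
            ∏ i ∈ range j, (p0 m S + q0 m S * ((j+2 : ℕ) : K) - 1 - i))
        = ((ξ + (((j+2) : ℕ) : K)⁻¹) * (((m+1-S.card : ℕ) : K) * p0 m S)
            * ((j+1).factorial : K)⁻¹) *
            ∏ i ∈ range j, (p0 m S + q0 m S * ((j+2 : ℕ) : K) - 1 - i) := by ring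
      _ = (A0 m S * (((j+2).factorial : K)⁻¹ * p0 m S *
            (p0 m S + q0 m S * ((j+2 : ℕ) : K) - 1 - (j : K)))) *
            ∏ i ∈ range j, (p0 m S + q0 m S * ((j+2 : ℕ) : K) - 1 - i) := by rw [key]
      _ = A0 m S * (((j+2).factorial : K)⁻¹ * p0 m S *
            ((∏ i ∈ range j, (p0 m S + q0 m S * ((j+2 : ℕ) : K) - 1 - i)) *
              (p0 m S + q0 m S * ((j+2 : ℕ) : K) - 1 - (j : K)))) := by ring

def Acf (k d : ℕ) : K :=
  A0 m S ^ (k+d) * cc (q0 m S) k (p0 m S)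
    * cc (qb m S) d (((S.card * k : ℕ) : K) * p0 m S)

def Pcf (n : ℕ) : K := A0 m S ^ n * cc (qb m S) n (p0 m S)

lemma coeff2_mul (P Q : R2) (e δ : ℕ) :
    ((P * Q).coeff e).coeff δ
      = ∑ ee ∈ Finset.HasAntidiagonal.antidiagonal e, ∑ dd ∈ Finset.HasAntidiagonal.antidiagonal δ,
        ((P.coeff ee.1).coeff dd.1) * ((Q.coeff ee.2).coeff dd.2) := by
  rw [Polynomial.coeff_mul, Polynomial.finset_sum_coeff]
  apply Finset.sum_congr rfl
  intro ee _
  rw [Polynomial.coeff_mul]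

lemma internals_eq_zero {T : MTree (m+1)} (h : T.internals = 0) : T = MTree.leaf := by
  cases T with
  | leaf => rfl
  | node c => rw [MTree.internals] at h; omega

lemma PP_antidiagonal (a : ℕ) :
    PP m S a = ∑ kd ∈ Finset.HasAntidiagonal.antidiagonal a, Ahat m S kd.1 kd.2 := by
  rw [PP, Finset.Nat.sum_antidiagonal_eq_sum_range_succ_mk]
  rw [← Finset.sum_fiberwise_of_maps_to
    (g := fun T => internalsS S T) (t := range (a+1)) ?_ (wK m S)]
  · apply Finset.sum_congr rfl
    intro j hj
    rw [Finset.mem_range] at hj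
    have hja : j + (a - j) = a := by omega
    rw [Ahat, hja]
  · intro T hT
    rw [mem_TF] at hT
    exact Finset.mem_range.mpr
      (show internalsS S T < a + 1 by have := internalsS_le_internals m S T; omega)

/-- the binary (untwisted) form of the master lemma -/
lemma master0 (q : K) (n : ℕ) (y r' : K) :
    ∑ kj ∈ Finset.HasAntidiagonal.antidiagonal n, cc q kj.1 y * cc q kj.2 r' = cc q n (y + r') := by
  have h := master q 0 n y r'
  simp only [sub_zero, zero_mul, zero_add] at h
  exact h

/-- the `Φ^j Ψ^l` coefficient formula, given the closed forms below level `N`. -/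
lemma coeff2_pow (N : ℕ)
    (hA : ∀ k d : ℕ, k + d ≤ N → Ahat m S k d = Acf m S k d)
    (hP : ∀ a : ℕ, a ≤ N → PP m S a = Pcf m S a) :
    ∀ j l e δ : ℕ, e + δ ≤ N →
      (((Φ m S N)^j * (Ψ m S N)^l).coeff e).coeff δ
        = A0 m S ^ (e+δ) * cc (q0 m S) e ((j : K) * p0 m S)
            * cc (qb m S) δ (((S.card * e : ℕ) : K) * p0 m S + (l : K) * p0 m S) := by
  intro j
  induction j with
  | zero =>
    intro l
    induction l with
    | zero =>
      intro e δ _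
      simp only [pow_zero, one_mul, Nat.cast_zero, zero_mul]
      rw [Polynomial.coeff_one]
      by_cases he : e = 0
      · subst he
        rw [if_pos rfl, Polynomial.coeff_one]
        by_cases hd : δ = 0
        · subst hd
          simp [cc_zero]
        · rw [if_neg hd]
          have h0 : ((S.card * 0 : ℕ) : K) * p0 m S + 0 = 0 := by norm_num
          rw [h0, cc_zero_right _ hd]
          ring
      · rw [if_neg he, Polynomial.coeff_zero, cc_zero_right _ he]
        ring
    | succ l ihl =>
      intro e δ hed
      have hstep : (Φ m S N)^0 * (Ψ m S N)^(l+1)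
          = Ψ m S N * ((Φ m S N)^0 * (Ψ m S N)^l) := by ring
      rw [hstep, coeff2_mul]
      rw [Finset.sum_eq_single_of_mem ((0, e) : ℕ × ℕ)
        (by rw [Finset.HasAntidiagonal.mem_antidiagonal]; omega) ?side]
      case side =>
        intro b hb hne
        apply Finset.sum_eq_zero
        intro dd _
        have hb1 : b.1 ≠ 0 := by
          rw [Finset.HasAntidiagonal.mem_antidiagonal] at hb
          intro h0
          apply hne
          have : b.2 = e := by omega
          rw [Prod.ext_iff]
          exact ⟨h0, this⟩
        rw [coeff_Psi_pos m S hb1, Polynomial.coeff_zero, zero_mul]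
      have hterm : ∀ dd ∈ Finset.HasAntidiagonal.antidiagonal δ,
          (((Ψ m S N).coeff 0).coeff dd.1) *
            ((((Φ m S N)^0 * (Ψ m S N)^l).coeff e).coeff dd.2)
          = (A0 m S ^ (e+δ) * cc (q0 m S) e ((0 : K) * p0 m S)) *
            (cc (qb m S) dd.1 (p0 m S) *
              cc (qb m S) dd.2 (((S.card * e : ℕ) : K) * p0 m S + (l : K) * p0 m S)) := by
        intro dd hdd
        rw [Finset.HasAntidiagonal.mem_antidiagonal] at hdd
        rw [coeff_Psi0 m S (by omega), hP dd.1 (by omega), Pcf,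
          ihl e dd.2 (by omega)]
        rw [show e + δ = dd.1 + (e + dd.2) by omega, pow_add]
        ring
      rw [Finset.sum_congr rfl hterm, ← Finset.mul_sum,
        master0 (qb m S) δ (p0 m S)
          (((S.card * e : ℕ) : K) * p0 m S + (l : K) * p0 m S)]
      have harg : p0 m S + (((S.card * e : ℕ) : K) * p0 m S + (l : K) * p0 m S)
          = ((S.card * e : ℕ) : K) * p0 m S + ((l+1 : ℕ) : K) * p0 m S := by
        push_cast
        ring
      rw [harg]
      ring
  | succ j ihj =>
    intro l e δ hed
    have hstep : (Φ m S N)^(j+1) * (Ψ m S N)^l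
        = Φ m S N * ((Φ m S N)^j * (Ψ m S N)^l) := by ring
    rw [hstep, coeff2_mul]
    have hinner : ∀ ee ∈ Finset.HasAntidiagonal.antidiagonal e,
        (∑ dd ∈ Finset.HasAntidiagonal.antidiagonal δ,
          (((Φ m S N).coeff ee.1).coeff dd.1) *
            ((((Φ m S N)^j * (Ψ m S N)^l).coeff ee.2).coeff dd.2))
        = (A0 m S ^ (e+δ) *
            (cc (q0 m S) ee.1 (p0 m S) * cc (q0 m S) ee.2 ((j : K) * p0 m S))) *
          cc (qb m S) δ (((S.card * e : ℕ) : K) * p0 m S + (l : K) * p0 m S) := by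
      intro ee hee
      rw [Finset.HasAntidiagonal.mem_antidiagonal] at hee
      have hterm : ∀ dd ∈ Finset.HasAntidiagonal.antidiagonal δ,
          (((Φ m S N).coeff ee.1).coeff dd.1) *
            ((((Φ m S N)^j * (Ψ m S N)^l).coeff ee.2).coeff dd.2)
          = (A0 m S ^ (e+δ) *
              (cc (q0 m S) ee.1 (p0 m S) * cc (q0 m S) ee.2 ((j : K) * p0 m S))) *
            (cc (qb m S) dd.1 (((S.card * ee.1 : ℕ) : K) * p0 m S) *
              cc (qb m S) dd.2
                (((S.card * ee.2 : ℕ) : K) * p0 m S + (l : K) * p0 m S)) := by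
        intro dd hdd
        rw [Finset.HasAntidiagonal.mem_antidiagonal] at hdd
        rw [coeff_Phi m S (by omega), hA ee.1 dd.1 (by omega), Acf,
          ihj l ee.2 dd.2 (by omega)]
        rw [show e + δ = (ee.1 + dd.1) + (ee.2 + dd.2) by omega, pow_add]
        ring
      rw [Finset.sum_congr rfl hterm, ← Finset.mul_sum,
        master0 (qb m S) δ (((S.card * ee.1 : ℕ) : K) * p0 m S)
          (((S.card * ee.2 : ℕ) : K) * p0 m S + (l : K) * p0 m S)]
      congr 1
      have : (S.card * ee.1 : ℕ) + (S.card * ee.2 : ℕ) = (S.card * e : ℕ) := by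
        rw [← hee]; ring
      push_cast [← this]
      ring
    rw [Finset.sum_congr rfl hinner]
    have hpull : ∀ ee ∈ Finset.HasAntidiagonal.antidiagonal e,
        (A0 m S ^ (e+δ) *
            (cc (q0 m S) ee.1 (p0 m S) * cc (q0 m S) ee.2 ((j : K) * p0 m S))) *
          cc (qb m S) δ (((S.card * e : ℕ) : K) * p0 m S + (l : K) * p0 m S)
        = (A0 m S ^ (e+δ) *
            cc (qb m S) δ (((S.card * e : ℕ) : K) * p0 m S + (l : K) * p0 m S)) *
          (cc (q0 m S) ee.1 (p0 m S) * cc (q0 m S) ee.2 ((j : K) * p0 m S)) := by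
      intro ee _
      ring
    rw [Finset.sum_congr rfl hpull, ← Finset.mul_sum,
      master0 (q0 m S) e (p0 m S) ((j : K) * p0 m S)]
    have harg : p0 m S + (j : K) * p0 m S = ((j+1 : ℕ) : K) * p0 m S := by
      push_cast
      ring
    rw [harg]
    ring

/-- The grand closed-form theorem for the refined weights. -/
lemma Ahat_closed : ∀ n k d : ℕ, k + d = n → Ahat m S k d = Acf m S k d := by
  intro n
  induction n using Nat.strong_induction_on with
  | _ n IH =>
    intro k d hkd
    by_cases hn : n = 0
    · subst hn
      have hk : k = 0 := by omega
      have hd : d = 0 := by omega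
      subst hk; subst hd
      have hTF : (TF m 0).filter (fun T => internalsS S T = 0) = {MTree.leaf} := by
        ext T
        simp only [Finset.mem_filter, mem_TF, Finset.mem_singleton]
        constructor
        · rintro ⟨h1, _⟩
          exact internals_eq_zero m h1
        · rintro rfl
          exact ⟨rfl, rfl⟩
      rw [Ahat]
      rw [show (0 + 0 : ℕ) = 0 from rfl, hTF, Finset.sum_singleton]
      have hw : wK m S MTree.leaf = 1 := by
        rw [wK]
        have : wQ m S MTree.leaf = 1 := rfl
        rw [this, map_one]
      rw [hw, Acf]
      simp [cc_zero]
    · -- n ≥ 1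
      obtain ⟨N, rfl⟩ : ∃ N, n = N + 1 := ⟨n - 1, by omega⟩
      have hA : ∀ k' d' : ℕ, k' + d' ≤ N → Ahat m S k' d' = Acf m S k' d' := by
        intro k' d' h
        exact IH (k' + d') (by omega) k' d' rfl
      have hP : ∀ a : ℕ, a ≤ N → PP m S a = Pcf m S a := by
        intro a ha
        rw [PP_antidiagonal]
        have h1 : ∀ kd ∈ Finset.HasAntidiagonal.antidiagonal a,
            Ahat m S kd.1 kd.2
            = (A0 m S ^ a) *
              (cc (q0 m S) kd.1 (p0 m S) *
                cc (qb m S) kd.2 (((S.card : K) * p0 m S) * (kd.1 : K) + 0)) := by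
          intro kd hkd2
          rw [Finset.HasAntidiagonal.mem_antidiagonal] at hkd2
          rw [IH (kd.1 + kd.2) (by omega) kd.1 kd.2 rfl, Acf, hkd2]
          push_cast
          ring
        rw [Finset.sum_congr rfl h1, ← Finset.mul_sum]
        have hM := master (qb m S) ((S.card : K) * p0 m S) a (p0 m S) 0
        rw [q0_eq m S] at hM
        rw [hM, Pcf, add_zero]
      -- now the root decomposition
      have hΦ : Φ m S (N+1)
          = 1 + Polynomial.C (Polynomial.C ξ) * Θ m S N + J (Θ m S N) := Phi_succ m S N
      have hsucc : ∀ k d : ℕ, ((Φ m S (N+1)).coeff k).coeff d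
          = ((1 : R2).coeff k).coeff d
            + ξ * ((Θ m S N).coeff k).coeff d
            + ((k : K))⁻¹ * ((Θ m S N).coeff k).coeff d := by
        intro k d
        rw [hΦ]
        simp only [Polynomial.coeff_add, Polynomial.coeff_C_mul, J_coeff]
      by_cases hk : k = 0
      · subst hk
        have hco : Ahat m S 0 d = ((Φ m S (N+1)).coeff 0).coeff d :=
          (coeff_Phi m S (by omega)).symm
        have hXW : (Θ m S N).coeff 0 = 0 := by
          rw [Θ, Polynomial.mul_coeff_zero, Polynomial.coeff_X_zero, zero_mul]
        rw [hco, hsucc 0 d, hXW]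
        simp only [Polynomial.coeff_zero, mul_zero, add_zero, Polynomial.coeff_one]
        rw [if_pos trivial, Polynomial.coeff_one, if_neg (show ¬ d = 0 by omega)]
        rw [Acf]
        have h0 : ((S.card * 0 : ℕ) : K) * p0 m S = 0 := by norm_num
        rw [h0, cc_zero_right _ (show d ≠ 0 by omega)]
        ring
      · -- k ≥ 1
        obtain ⟨k', rfl⟩ : ∃ k', k = k' + 1 := ⟨k - 1, by omega⟩
        have hco : Ahat m S (k'+1) d = ((Φ m S (N+1)).coeff (k'+1)).coeff d :=
          (coeff_Phi m S (by omega)).symm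
        rw [hco, hsucc (k'+1) d]
        have h1c : ((1 : R2).coeff (k'+1)).coeff d = 0 := by
          rw [Polynomial.coeff_one, if_neg (Nat.succ_ne_zero k'), Polynomial.coeff_zero]
        have hXc : (Θ m S N).coeff (k'+1)
            = ((Φ m S N)^(m+1-S.card) * (Ψ m S N)^S.card).coeff k' := by
          rw [Θ, Polynomial.coeff_X_mul]
        rw [h1c, hXc]
        have hW := coeff2_pow m S N hA hP (m+1-S.card) S.card k' d (by omega)
        rw [hW]
        have harg : ((S.card * k' : ℕ) : K) * p0 m S + (S.card : K) * p0 m S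
            = ((S.card * (k'+1) : ℕ) : K) * p0 m S := by
          push_cast
          ring
        rw [harg]
        have hI := I1 m S (Nat.succ_ne_zero k')
        have hsub : ((k' + 1 : ℕ)) - 1 = k' := rfl
        rw [hsub] at hI
        rw [Acf]
        have hfin : (ξ + ((k'+1 : ℕ) : K)⁻¹) *
              (A0 m S ^ (k' + d) * cc (q0 m S) k' (((m+1-S.card : ℕ) : K) * p0 m S)
                * cc (qb m S) d (((S.card * (k'+1) : ℕ) : K) * p0 m S))
            = A0 m S ^ (k' + 1 + d) * cc (q0 m S) (k'+1) (p0 m S)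
                * cc (qb m S) d (((S.card * (k'+1) : ℕ) : K) * p0 m S) := by
          have hpw : A0 m S ^ (k' + 1 + d) = A0 m S ^ (k' + d) * A0 m S := by
            rw [← pow_succ]
            congr 1
            omega
          rw [hpw]
          calc (ξ + ((k'+1 : ℕ) : K)⁻¹) *
              (A0 m S ^ (k' + d) * cc (q0 m S) k' (((m+1-S.card : ℕ) : K) * p0 m S)
                * cc (qb m S) d (((S.card * (k'+1) : ℕ) : K) * p0 m S))
              = ((ξ + ((k'+1 : ℕ) : K)⁻¹) *
                  cc (q0 m S) k' (((m+1-S.card : ℕ) : K) * p0 m S)) *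
                (A0 m S ^ (k' + d) *
                  cc (qb m S) d (((S.card * (k'+1) : ℕ) : K) * p0 m S)) := by ring
            _ = (A0 m S * cc (q0 m S) (k'+1) (p0 m S)) *
                (A0 m S ^ (k' + d) *
                  cc (qb m S) d (((S.card * (k'+1) : ℕ) : K) * p0 m S)) := by rw [hI]
            _ = A0 m S ^ (k' + d) * A0 m S * cc (q0 m S) (k'+1) (p0 m S)
                * cc (qb m S) d (((S.card * (k'+1) : ℕ) : K) * p0 m S) := by ring
        rw [← hfin]
        ring

lemma PP_closed (n : ℕ) : PP m S n = Pcf m S n := by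
  rw [PP_antidiagonal]
  have h1 : ∀ kd ∈ Finset.HasAntidiagonal.antidiagonal n,
      Ahat m S kd.1 kd.2
      = (A0 m S ^ n) *
        (cc (q0 m S) kd.1 (p0 m S) *
          cc (qb m S) kd.2 (((S.card : K) * p0 m S) * (kd.1 : K) + 0)) := by
    intro kd hkd2
    rw [Finset.HasAntidiagonal.mem_antidiagonal] at hkd2
    rw [Ahat_closed m S (kd.1 + kd.2) kd.1 kd.2 rfl, Acf, hkd2]
    push_cast
    ring
  rw [Finset.sum_congr rfl h1, ← Finset.mul_sum]
  have hM := master (qb m S) ((S.card : K) * p0 m S) n (p0 m S) 0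
  rw [q0_eq m S] at hM
  rw [hM, Pcf, add_zero]

lemma xi_eq : ξ = RatFunc.X := by
  rw [ξ, φ]
  exact RatFunc.algebraMap_X

lemma Pcf_eq {n : ℕ} (hn : n ≠ 0) :
    Pcf m S n
      = ((n.factorial : K))⁻¹ * (ξ + 1) *
        ∏ i ∈ Finset.Icc 1 (n - 1),
          (((m:K) * (n:K) + (i:K) + 1) * (ξ + 1)
            - ((m:K) - (S.card:K) + 1) * (i:K)) := by
  rw [Pcf, cc_eq' _ hn]
  have hIcc : Finset.Icc 1 (n-1) = Finset.Ico 1 n := by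
    rw [← Finset.Ico_add_one_right_eq_Icc]
    congr 1
    omega
  rw [hIcc, Finset.prod_Ico_eq_prod_range]
  have hfac : ∀ j ∈ range (n-1),
      (((m:K) * (n:K) + ((1+j : ℕ):K) + 1) * (ξ + 1)
          - ((m:K) - (S.card:K) + 1) * ((1+j:ℕ):K))
      = A0 m S * (p0 m S + qb m S * (n:K) - 1 - (j:K)) := by
    intro j _
    have hβ : ((m - S.card : ℕ) : K) = (m:K) - (S.card:K) := Nat.cast_sub (card_le m S)
    have hA0p0 := A0_mul_p0 m S
    rw [A0, hβ] at hA0p0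
    rw [A0, qb, hβ]
    push_cast
    linear_combination (-(1 + (m:K) * (n:K))) * hA0p0
  rw [Finset.prod_congr rfl hfac]
  have hpow : ∏ j ∈ range (n-1), (A0 m S * (p0 m S + qb m S * (n:K) - 1 - (j:K)))
      = A0 m S ^ (n-1) * ∏ j ∈ range (n-1), (p0 m S + qb m S * (n:K) - 1 - (j:K)) := by
    rw [Finset.prod_mul_distrib, Finset.prod_const, Finset.card_range]
  rw [hpow]
  have hAn : A0 m S ^ n = A0 m S * A0 m S ^ (n-1) := by
    rw [← pow_succ']
    congr 1
    omega
  rw [hAn]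
  have hA0p0 := A0_mul_p0 m S
  linear_combination ((n.factorial : K))⁻¹ * A0 m S ^ (n-1) *
    (∏ j ∈ range (n-1), (p0 m S + qb m S * (n:K) - 1 - (j:K))) * hA0p0

end Trees

end HLF
/-- **Theorem 1.2, first form (Sun–Zhang).**  For `m ≥ 1`, `n ≥ 1` and `S ⊆ [m]`
with `s = |S|`,
`∑_{T ∈ 𝒯_{n,m+1}} ∏_{v ∈ 𝓘(T)} (x + 1/ℍ_v^S)
  = ((x+1)/n!) ∏_{i=1}^{n-1} ((mn+i+1)(x+1) - (m-s+1)i)` in `ℚ[x]`. -/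
theorem hook_length_formula_second_kind (m n : ℕ) (hm : 1 ≤ m) (hn : 1 ≤ n)
    (S : Finset (Fin m)) :
    (∑ᶠ T ∈ {T : MTree (m + 1) | T.internals = n},
        MTree.hookProdS S (fun h => (X : ℚ[X]) + C ((h : ℚ)⁻¹)) T)
      = C ((n.factorial : ℚ)⁻¹) * ((X : ℚ[X]) + 1) *
          ∏ i ∈ Finset.Icc 1 (n - 1),
            (C ((m : ℚ) * n + (i : ℚ) + 1) * ((X : ℚ[X]) + 1) -
              C (((m : ℚ) - (S.card : ℚ) + 1) * (i : ℚ))) := by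
  classical
  have hset : {T : MTree (m + 1) | T.internals = n} = ↑(HLF.TF m n) := by
    ext T
    simp [HLF.mem_TF]
  rw [hset, finsum_mem_coe_finset]
  apply RatFunc.algebraMap_injective ℚ
  rw [map_sum]
  have hL : (∑ T ∈ HLF.TF m n, (algebraMap (Polynomial ℚ) (RatFunc ℚ))
      (MTree.hookProdS S (fun h => (X : ℚ[X]) + C ((h : ℚ)⁻¹)) T)) = HLF.PP m S n := rfl
  rw [hL, HLF.PP_closed m S n, HLF.Pcf_eq m S (show n ≠ 0 by omega), HLF.xi_eq]
  rw [map_mul, map_mul, map_prod]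
  have h1 : (algebraMap (Polynomial ℚ) (RatFunc ℚ)) (C ((n.factorial : ℚ)⁻¹))
      = ((n.factorial : HLF.K))⁻¹ := by
    rw [RatFunc.algebraMap_C, map_inv₀, map_natCast]
  have h2 : (algebraMap (Polynomial ℚ) (RatFunc ℚ)) ((X : ℚ[X]) + 1)
      = RatFunc.X + 1 := by
    rw [map_add, map_one, RatFunc.algebraMap_X]
  rw [h1, h2]
  congr 1
  apply Finset.prod_congr rfl
  intro i _
  rw [map_sub, map_mul, h2, RatFunc.algebraMap_C, RatFunc.algebraMap_C]
  simp only [map_add, map_mul, map_sub, map_one, map_natCast]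
end

section
/- For any integers m ≥ 1, n ≥ 1, any subset S of [m] = {1,2,…,m} with s = |S|, the sum over all complete (m+1)-ary trees T with n internal vertices of the product over all internal vertices v of T of (((m−s)·ℍ_v^S + 1)x − ℍ_v^S + 1)/((m−s+1)·ℍ_v^S) equals (1/(mn+1)) · C((mn+1)x, n), as an identity of polynomials in x over ℚ. -/
open Polynomial Finset

noncomputable section

variable {R : Type*} [CommRing R] [Algebra ℚ R]

/-- Gould polynomial `A_n(a,b) = (a/n!) ∏_{j=1}^{n-1} (a + n b − j)`. -/
def gA (b a : R) : ℕ → R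
  | 0 => 1
  | n+1 => algebraMap ℚ R (((n+1).factorial : ℚ)⁻¹) * a *
      ∏ j ∈ Finset.range n, (a + ((n : R)+1) * b - ((j : R)+1))

@[simp] lemma gA_zero (b a : R) : gA b a 0 = 1 := rfl

lemma gA_succ (b a : R) (n : ℕ) : gA b a (n+1) =
    algebraMap ℚ R (((n+1).factorial : ℚ)⁻¹) * a *
      ∏ j ∈ Finset.range n, (a + ((n : R)+1) * b - ((j : R)+1)) := rfl

@[simp] lemma gA_a_zero (b : R) (n : ℕ) (hn : 1 ≤ n) : gA b 0 n = 0 := by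
  obtain ⟨p, rfl⟩ := Nat.exists_eq_add_of_le hn
  rw [add_comm, gA_succ, mul_zero, zero_mul]

lemma gA_map {R' : Type*} [CommRing R'] [Algebra ℚ R'] (φ : R →ₐ[ℚ] R')
    (b a : R) (n : ℕ) : φ (gA b a n) = gA (φ b) (φ a) n := by
  cases n with
  | zero => simp
  | succ n =>
    rw [gA_succ, gA_succ, map_mul, map_mul, map_prod, AlgHom.commutes]
    congr 1
    refine Finset.prod_congr rfl fun j hj => ?_
    push_cast
    rw [map_sub, map_add, map_mul, map_add, map_add, map_natCast, map_natCast,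
      map_one]

/-- The fundamental recurrence `A_n(a+1,b) = A_n(a,b) + A_{n-1}(a+b,b)`. -/
lemma gA_rec (b a : R) (n : ℕ) :
    gA b (a+1) (n+1) = gA b a (n+1) + gA b (a+b) n := by
  cases n with
  | zero =>
    simp [gA_succ]
  | succ p =>
    have hfac : (((p+2).factorial : ℚ))⁻¹ * ((p:ℚ)+2) = ((p+1).factorial : ℚ)⁻¹ := by
      rw [Nat.factorial_succ]
      have h0 : ((p+1).factorial : ℚ) ≠ 0 := by positivity
      push_cast
      rw [mul_inv]
      field_simp
      ring
    set β : R := a + ((p:R)+1+1) * b with hβ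
    have h1 : ∏ j ∈ Finset.range (p+1), ((a+1) + ((p : R)+1+1) * b - ((j : R)+1))
        = β * ∏ j ∈ Finset.range p, (β - ((j : R)+1)) := by
      have e : ∀ j : ℕ, (a+1) + ((p : R)+1+1) * b - ((j : R)+1) = β - (j : R) := by
        intro j; rw [hβ]; ring
      calc ∏ j ∈ Finset.range (p+1), ((a+1) + ((p : R)+1+1) * b - ((j : R)+1))
          = ∏ j ∈ Finset.range (p+1), (β - (j : R)) := Finset.prod_congr rfl fun j _ => e j
        _ = (∏ j ∈ Finset.range p, (β - ((j+1 : ℕ) : R))) * (β - ((0:ℕ) : R)) :=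
            Finset.prod_range_succ' (fun j : ℕ => (β - (j : R))) p
        _ = β * ∏ j ∈ Finset.range p, (β - ((j : R)+1)) := by
            push_cast
            ring
    have h2 : ∏ j ∈ Finset.range (p+1), (a + ((p : R)+1+1) * b - ((j : R)+1))
        = (∏ j ∈ Finset.range p, (β - ((j : R)+1))) * (β - ((p:R)+1)) := by
      rw [Finset.prod_range_succ]
    have h3 : ∏ j ∈ Finset.range p, ((a+b) + ((p : R)+1) * b - ((j : R)+1))
        = ∏ j ∈ Finset.range p, (β - ((j : R)+1)) := by
      refine Finset.prod_congr rfl fun j _ => ?_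
      rw [hβ]; ring
    rw [gA_succ, gA_succ, gA_succ]
    push_cast
    rw [h1, h2, h3]
    set Q : R := ∏ j ∈ Finset.range p, (β - ((j : R)+1)) with hQ
    have hκ : (algebraMap ℚ R) (((p+1+1).factorial : ℚ))⁻¹ * (((p:R)+1)+1)
        = algebraMap ℚ R (((p+1).factorial : ℚ))⁻¹ := by
      rw [show (((p:R)+1)+1) = algebraMap ℚ R ((p:ℚ)+2) by rw [map_add, map_natCast, map_ofNat]; ring
        , ← map_mul]
      exact congrArg _ hfac
    calc (algebraMap ℚ R) (((p+1+1).factorial : ℚ))⁻¹ * (a+1) * (β * Q)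
        = (algebraMap ℚ R) (((p+1+1).factorial : ℚ))⁻¹ * (a * (Q * (β - ((p:R)+1)))
            + ((((p:R)+1)+1) * ((a+b) * Q))) := by
          rw [hβ]; ring
      _ = (algebraMap ℚ R) (((p+1+1).factorial : ℚ))⁻¹ * a * (Q * (β - ((p:R)+1)))
            + ((algebraMap ℚ R) (((p+1+1).factorial : ℚ))⁻¹ * (((p:R)+1)+1)) * ((a+b) * Q) := by
          ring
      _ = _ := by rw [hκ]; ring

lemma gA_split (b a : ℚ) (k : ℕ) :
    gA b (a+1) k = gA b a k + (if k = 0 then 0 else gA b (a+b) (k-1)) := by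
  cases k with
  | zero => simp
  | succ k' => simp [gA_rec]

lemma master_nat : ∀ n : ℕ, ∀ a b c e : ℕ,
    ∑ k ∈ Finset.range (n+1),
      gA (b:ℚ) (a:ℚ) k * gA ((b:ℚ)+(c:ℚ)) ((c:ℚ)*(k:ℚ)+(e:ℚ)) (n-k)
    = gA ((b:ℚ)+(c:ℚ)) ((a:ℚ)+(e:ℚ)) n := by
  intro n
  induction n using Nat.strong_induction_on with
  | _ n IH =>
    intro a
    induction a with
    | zero =>
      intro b c e
      rw [Finset.sum_eq_single 0]
      · simp
      · intro k hk hk0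
        obtain ⟨k', rfl⟩ := Nat.exists_eq_add_of_lt (Nat.pos_of_ne_zero hk0)
        rw [Nat.cast_zero, gA_a_zero _ _ (by omega), zero_mul]
      · intro h; simp at h
    | succ a IHa =>
      intro b c e
      cases n with
      | zero => simp
      | succ p =>
        push_cast
        calc ∑ k ∈ Finset.range (p+1+1),
              gA (b:ℚ) ((a:ℚ)+1) k * gA ((b:ℚ)+(c:ℚ)) ((c:ℚ)*(k:ℚ)+(e:ℚ)) (p+1-k)
            = ∑ k ∈ Finset.range (p+1+1),
                (gA (b:ℚ) (a:ℚ) k * gA ((b:ℚ)+(c:ℚ)) ((c:ℚ)*(k:ℚ)+(e:ℚ)) (p+1-k)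
                 + (if k = 0 then 0 else gA (b:ℚ) ((a:ℚ)+(b:ℚ)) (k-1))
                    * gA ((b:ℚ)+(c:ℚ)) ((c:ℚ)*(k:ℚ)+(e:ℚ)) (p+1-k)) := by
              refine Finset.sum_congr rfl fun k _ => ?_
              rw [gA_split, add_mul]
          _ = gA ((b:ℚ)+(c:ℚ)) ((a:ℚ)+(e:ℚ)) (p+1)
              + ∑ k ∈ Finset.range (p+1+1),
                (if k = 0 then 0 else gA (b:ℚ) ((a:ℚ)+(b:ℚ)) (k-1))
                    * gA ((b:ℚ)+(c:ℚ)) ((c:ℚ)*(k:ℚ)+(e:ℚ)) (p+1-k) := by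
              rw [Finset.sum_add_distrib]
              congr 1
              have := IHa b c e
              push_cast at this
              exact this
          _ = gA ((b:ℚ)+(c:ℚ)) ((a:ℚ)+(e:ℚ)) (p+1)
              + ∑ k ∈ Finset.range (p+1),
                  gA (b:ℚ) ((a:ℚ)+(b:ℚ)) k * gA ((b:ℚ)+(c:ℚ)) ((c:ℚ)*(k:ℚ)+((c:ℚ)+(e:ℚ))) (p-k) := by
              congr 1
              calc ∑ k ∈ Finset.range (p+1+1),
                    (if k = 0 then (0:ℚ) else gA (b:ℚ) ((a:ℚ)+(b:ℚ)) (k-1))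
                      * gA ((b:ℚ)+(c:ℚ)) ((c:ℚ)*(k:ℚ)+(e:ℚ)) (p+1-k)
                  = (∑ k ∈ Finset.range (p+1),
                      (if k+1 = 0 then (0:ℚ) else gA (b:ℚ) ((a:ℚ)+(b:ℚ)) (k+1-1))
                        * gA ((b:ℚ)+(c:ℚ)) ((c:ℚ)*((k+1 : ℕ):ℚ)+(e:ℚ)) (p+1-(k+1)))
                    + (if (0:ℕ) = 0 then (0:ℚ) else gA (b:ℚ) ((a:ℚ)+(b:ℚ)) (0-1))
                        * gA ((b:ℚ)+(c:ℚ)) ((c:ℚ)*((0:ℕ):ℚ)+(e:ℚ)) (p+1-0) :=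
                    Finset.sum_range_succ' _ (p+1)
                _ = ∑ k ∈ Finset.range (p+1),
                      gA (b:ℚ) ((a:ℚ)+(b:ℚ)) k * gA ((b:ℚ)+(c:ℚ)) ((c:ℚ)*(k:ℚ)+((c:ℚ)+(e:ℚ))) (p-k) := by
                    rw [if_pos rfl, zero_mul, add_zero]
                    refine Finset.sum_congr rfl fun k _ => ?_
                    rw [if_neg (Nat.succ_ne_zero k), Nat.add_sub_cancel, Nat.succ_sub_succ]
                    congr 1
                    exact congrArg (fun z => gA ((b:ℚ)+(c:ℚ)) z (p-k)) (by push_cast; ring)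
          _ = gA ((b:ℚ)+(c:ℚ)) ((a:ℚ)+(e:ℚ)) (p+1)
              + gA ((b:ℚ)+(c:ℚ)) (((a:ℚ)+(e:ℚ))+((b:ℚ)+(c:ℚ))) p := by
              congr 1
              have := IH p (by omega) (a+b) b c (c+e)
              push_cast at this
              rw [this]
              exact congrArg (fun z => gA ((b:ℚ)+(c:ℚ)) z p) (by ring)
          _ = gA ((b:ℚ)+(c:ℚ)) ((a:ℚ)+1+(e:ℚ)) (p+1) := by
              rw [show (a:ℚ)+1+(e:ℚ) = ((a:ℚ)+(e:ℚ))+1 by ring, gA_rec]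

lemma eq_of_eval_nat {p q : ℚ[X]} (h : ∀ k : ℕ, p.eval (k:ℚ) = q.eval (k:ℚ)) : p = q := by
  have hroots : {x : ℚ | (p - q).IsRoot x}.Infinite := by
    refine Set.Infinite.mono ?_ (Set.infinite_range_of_injective (Nat.cast_injective (R := ℚ)))
    rintro x ⟨k, rfl⟩
    simp [Polynomial.IsRoot, h k]
  have := Polynomial.eq_zero_of_infinite_isRoot _ hroots
  exact sub_eq_zero.mp this

lemma gA_aeval (x : ℚ) (B A : ℚ[X]) (n : ℕ) :
    Polynomial.aeval x (gA B A n) = gA (Polynomial.aeval x B) (Polynomial.aeval x A) n :=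
  gA_map (Polynomial.aeval x) B A n

lemma master_lift1 (n : ℕ) (a : ℚ) (b c e : ℕ) :
    ∑ k ∈ Finset.range (n+1),
      gA (b:ℚ) a k * gA ((b:ℚ)+(c:ℚ)) ((c:ℚ)*(k:ℚ)+(e:ℚ)) (n-k)
    = gA ((b:ℚ)+(c:ℚ)) (a+(e:ℚ)) n := by
  have key : (∑ k ∈ Finset.range (n+1),
      gA (C (b:ℚ)) X k * C (gA ((b:ℚ)+(c:ℚ)) ((c:ℚ)*(k:ℚ)+(e:ℚ)) (n-k)))
      = gA (C ((b:ℚ)+(c:ℚ))) (X + C (e:ℚ)) n := by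
    apply eq_of_eval_nat
    intro q
    have h1 : ∀ r : ℚ[X], r.eval (q:ℚ) = Polynomial.aeval (q:ℚ) r := fun r => rfl
    rw [h1, h1, map_sum, gA_aeval]
    simp only [map_mul, gA_aeval, Polynomial.aeval_C, Polynomial.aeval_X, map_add]
    exact master_nat n q b c e
  have := congrArg (Polynomial.aeval a) key
  rw [map_sum, gA_aeval] at this
  simp only [map_mul, gA_aeval, Polynomial.aeval_C, Polynomial.aeval_X, map_add] at this
  exact this

lemma master_lift2 (n : ℕ) (a e : ℚ) (b c : ℕ) :
    ∑ k ∈ Finset.range (n+1),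
      gA (b:ℚ) a k * gA ((b:ℚ)+(c:ℚ)) ((c:ℚ)*(k:ℚ)+e) (n-k)
    = gA ((b:ℚ)+(c:ℚ)) (a+e) n := by
  have key : (∑ k ∈ Finset.range (n+1),
      gA (C (b:ℚ)) (C a) k * gA (C ((b:ℚ)+(c:ℚ))) (C ((c:ℚ)*(k:ℚ)) + X) (n-k))
      = gA (C ((b:ℚ)+(c:ℚ))) (C a + X) n := by
    apply eq_of_eval_nat
    intro q
    have h1 : ∀ r : ℚ[X], r.eval (q:ℚ) = Polynomial.aeval (q:ℚ) r := fun r => rfl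
    rw [h1, h1, map_sum, gA_aeval]
    simp only [map_mul, gA_aeval, Polynomial.aeval_C, Polynomial.aeval_X, map_add]
    exact master_lift1 n a b c q
  have := congrArg (Polynomial.aeval e) key
  rw [map_sum, gA_aeval] at this
  simp only [map_mul, gA_aeval, Polynomial.aeval_C, Polynomial.aeval_X, map_add] at this
  exact this

lemma master_lift3 (n : ℕ) (a c e : ℚ) (b : ℕ) :
    ∑ k ∈ Finset.range (n+1),
      gA (b:ℚ) a k * gA ((b:ℚ)+c) (c*(k:ℚ)+e) (n-k)
    = gA ((b:ℚ)+c) (a+e) n := by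
  have key : (∑ k ∈ Finset.range (n+1),
      gA (C (b:ℚ)) (C a) k * gA (C (b:ℚ) + X) (X*(C (k:ℚ)) + C e) (n-k))
      = gA (C (b:ℚ) + X) (C a + C e) n := by
    apply eq_of_eval_nat
    intro q
    have h1 : ∀ r : ℚ[X], r.eval (q:ℚ) = Polynomial.aeval (q:ℚ) r := fun r => rfl
    rw [h1, h1, map_sum, gA_aeval]
    simp only [map_mul, gA_aeval, Polynomial.aeval_C, Polynomial.aeval_X, map_add]
    exact master_lift2 n a e b q
  have := congrArg (Polynomial.aeval c) key
  rw [map_sum, gA_aeval] at this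
  simp only [map_mul, gA_aeval, Polynomial.aeval_C, Polynomial.aeval_X, map_add] at this
  exact this

/-- The master convolution identity (generalized Rothe–Hagen). -/
lemma master (n : ℕ) (a b c e : ℚ) :
    ∑ k ∈ Finset.range (n+1),
      gA b a k * gA (b+c) (c*(k:ℚ)+e) (n-k)
    = gA (b+c) (a+e) n := by
  have key : (∑ k ∈ Finset.range (n+1),
      gA X (C a) k * gA (X + C c) (C c *(C (k:ℚ)) + C e) (n-k))
      = gA (X + C c) (C a + C e) n := by
    apply eq_of_eval_nat
    intro q
    have h1 : ∀ r : ℚ[X], r.eval (q:ℚ) = Polynomial.aeval (q:ℚ) r := fun r => rfl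
    rw [h1, h1, map_sum, gA_aeval]
    simp only [map_mul, gA_aeval, Polynomial.aeval_C, Polynomial.aeval_X, map_add]
    exact master_lift3 n a c e q
  have := congrArg (Polynomial.aeval b) key
  rw [map_sum, gA_aeval] at this
  simp only [map_mul, gA_aeval, Polynomial.aeval_C, Polynomial.aeval_X, map_add] at this
  exact this

/-- Rothe–Hagen convolution. -/
lemma rothe (n : ℕ) (a b e : ℚ) :
    ∑ k ∈ Finset.range (n+1), gA b a k * gA b e (n-k) = gA b (a+e) n := by
  have := master n a b 0 e
  simp only [zero_mul, zero_add, add_zero] at this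
  exact this

namespace MTree

lemma internals_eq_zero_iff {q : ℕ} (T : MTree q) : T.internals = 0 ↔ T = leaf := by
  cases T with
  | leaf => simp [internals]
  | node c => simp [internals]

lemma finite_internals_le (q N : ℕ) : {T : MTree q | T.internals ≤ N}.Finite := by
  induction N with
  | zero =>
    refine Set.Finite.subset (Set.finite_singleton leaf) ?_
    intro T hT
    simp only [Set.mem_setOf_eq, Nat.le_zero] at hT
    simpa using (internals_eq_zero_iff T).mp hT
  | succ N ih =>
    refine Set.Finite.subset (Set.Finite.union (Set.finite_singleton leaf)
      (Set.Finite.image node (Set.Finite.pi (fun _ : Fin q => ih)))) ?_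
    intro T hT
    cases T with
    | leaf => exact Or.inl rfl
    | node c =>
      refine Or.inr ⟨c, ?_, rfl⟩
      simp only [Set.mem_pi, Set.mem_univ, Set.mem_setOf_eq, forall_true_left]
      intro i
      simp only [Set.mem_setOf_eq, internals] at hT
      have hsum : ∑ j, (c j).internals ≤ N := by omega
      exact le_trans (Finset.single_le_sum (f := fun j => (c j).internals)
        (fun j _ => Nat.zero_le _) (Finset.mem_univ i)) hsum

lemma finite_internals_eq (q n : ℕ) : {T : MTree q | T.internals = n}.Finite :=
  (finite_internals_le q n).subset (fun T hT => le_of_eq hT)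

lemma internalsS_le_internals {m : ℕ} (S : Finset (Fin m)) (T : MTree (m+1)) :
    T.internalsS S ≤ T.internals := by
  induction T with
  | leaf => simp [internalsS, internals]
  | node c ih =>
    simp only [internalsS, internals]
    have : ∑ i ∈ (S.image Fin.castSucc)ᶜ, (c i).internalsS S ≤ ∑ i, (c i).internals := by
      calc ∑ i ∈ (S.image Fin.castSucc)ᶜ, (c i).internalsS S
          ≤ ∑ i ∈ (S.image Fin.castSucc)ᶜ, (c i).internals :=
            Finset.sum_le_sum (fun i _ => ih i)
        _ ≤ ∑ i, (c i).internals := Finset.sum_le_sum_of_subset (Finset.subset_univ _)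
    omega

noncomputable instance instDecEqMTree {q : ℕ} : DecidableEq (MTree q) :=
  fun _ _ => Classical.propDecidable _

lemma internalsS_eq_zero_iff {m : ℕ} (S : Finset (Fin m)) (T : MTree (m+1)) :
    T.internalsS S = 0 ↔ T = leaf := by
  cases T with
  | leaf => simp [internalsS]
  | node c => simp [internalsS]

end MTree

/-- Step-down identity: `f(k) ⬝ A_{k-1}((M+1)x, Mx) = A_k(x, Mx)`. -/
lemma stepdown (M y : ℚ) (hM : M + 1 ≠ 0) (k : ℕ) (hk : 1 ≤ k) :
    (((M + 1) * k)⁻¹ * ((M * k + 1) * y - ((k:ℚ) - 1))) * gA (M*y) ((M+1)*y) (k-1)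
      = gA (M*y) y k := by
  obtain ⟨k', rfl⟩ : ∃ k', k = k' + 1 := ⟨k - 1, by omega⟩
  rw [Nat.add_sub_cancel]
  cases k' with
  | zero =>
    simp only [gA_zero, mul_one, gA_succ, Finset.range_zero, Finset.prod_empty]
    norm_num
    field_simp
  | succ p =>
    rw [gA_succ, gA_succ]
    have hcast : ∀ r : ℚ, (algebraMap ℚ ℚ) r = r := fun r => rfl
    rw [hcast, hcast]
    have harg : ∀ j : ℕ, (M+1)*y + ((p:ℚ)+1) * (M*y) - ((j:ℚ)+1)
        = y + (((p:ℚ)+1)+1) * (M*y) - ((j:ℚ)+1) := by intro j; ring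
    have hprod : ∏ j ∈ Finset.range (p+1), (y + (((p+1:ℕ):ℚ)+1) * (M*y) - ((j:ℚ)+1))
        = (∏ j ∈ Finset.range p, ((M+1)*y + ((p:ℚ)+1) * (M*y) - ((j:ℚ)+1)))
          * (y + (((p:ℚ)+1)+1) * (M*y) - ((p:ℚ)+1)) := by
      rw [Finset.prod_range_succ]
      push_cast
      congr 1
      exact Finset.prod_congr rfl fun j _ => by rw [harg]
    rw [hprod]
    have hfac1 : ((p+1).factorial : ℚ) ≠ 0 := by positivity
    have hfac2 : ((p+1+1).factorial : ℚ) = ((p:ℚ)+1+1) * ((p+1).factorial : ℚ) := by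
      rw [Nat.factorial_succ]; push_cast; ring
    have hp2 : ((p:ℚ)+1+1) ≠ 0 := by positivity
    push_cast
    rw [hfac2]
    field_simp
    ring

section Main

variable (m : ℕ) (S : Finset (Fin m)) (x : ℚ)

/-- The evaluated hook weight. -/
def fq (h : ℕ) : ℚ :=
  (((m:ℚ) - (S.card:ℚ) + 1) * (h:ℚ))⁻¹ *
    ((((m:ℚ) - (S.card:ℚ)) * (h:ℚ) + 1) * x - ((h:ℚ) - 1))

/-- The evaluated multiplicative tree weight. -/
def w : MTree (m+1) → ℚ := MTree.hookProdS S (fq m S x)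

lemma w_leaf : w m S x MTree.leaf = 1 := rfl

lemma w_node (c : Fin (m+1) → MTree (m+1)) :
    w m S x (MTree.node c)
      = fq m S x ((MTree.node c).internalsS S) * ∏ i, w m S x (c i) := rfl

lemma finTS (n k : ℕ) :
    {T : MTree (m+1) | T.internals = n ∧ T.internalsS S = k}.Finite :=
  (MTree.finite_internals_eq (m+1) n).subset (fun _ hT => hT.1)

/-- Trees with `n` internal vertices. -/
noncomputable def Tfin (n : ℕ) : Finset (MTree (m+1)) :=
  (MTree.finite_internals_eq (m+1) n).toFinset

/-- Trees with `n` internal vertices and `k` surviving internal vertices. -/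
noncomputable def TSfin (n k : ℕ) : Finset (MTree (m+1)) :=
  (finTS m S n k).toFinset

@[simp] lemma mem_Tfin (n : ℕ) (T : MTree (m+1)) :
    T ∈ Tfin m n ↔ T.internals = n := Set.Finite.mem_toFinset _

@[simp] lemma mem_TSfin (n k : ℕ) (T : MTree (m+1)) :
    T ∈ TSfin m S n k ↔ T.internals = n ∧ T.internalsS S = k :=
  Set.Finite.mem_toFinset _

lemma finC (q : ℕ) (χ : Fin q → Bool) (n k : ℕ) :
    {c : Fin q → MTree (m+1) | (∑ i, (c i).internals) = n ∧
      (∑ i, cond (χ i) ((c i).internalsS S) 0) = k}.Finite := by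
  refine Set.Finite.subset (Set.Finite.pi (fun _ : Fin q =>
    MTree.finite_internals_le (m+1) n)) ?_
  rintro c ⟨h1, -⟩
  simp only [Set.mem_pi, Set.mem_univ, Set.mem_setOf_eq, forall_true_left]
  intro i
  rw [← h1]
  exact Finset.single_le_sum (f := fun j => (c j).internals)
    (fun j _ => Nat.zero_le _) (Finset.mem_univ i)

/-- Tuples of trees with prescribed total size and total tracked surviving size. -/
noncomputable def Cfin (q : ℕ) (χ : Fin q → Bool) (n k : ℕ) :
    Finset (Fin q → MTree (m+1)) := (finC m S q χ n k).toFinset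

@[simp] lemma mem_Cfin (q : ℕ) (χ : Fin q → Bool) (n k : ℕ) (c : Fin q → MTree (m+1)) :
    c ∈ Cfin m S q χ n k ↔ (∑ i, (c i).internals) = n ∧
      (∑ i, cond (χ i) ((c i).internalsS S) 0) = k := Set.Finite.mem_toFinset _

/-- Joint sum. -/
noncomputable def F (n k : ℕ) : ℚ := ∑ T ∈ TSfin m S n k, w m S x T

/-- Full sum. -/
noncomputable def Ffull (n : ℕ) : ℚ := ∑ T ∈ Tfin m n, w m S x T

/-- Convolution sum. -/
noncomputable def Csum (q : ℕ) (χ : Fin q → Bool) (n k : ℕ) : ℚ :=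
  ∑ c ∈ Cfin m S q χ n k, ∏ i, w m S x (c i)

lemma F_eq_zero (n k : ℕ) (h : n < k) : F m S x n k = 0 := by
  rw [F, Finset.sum_eq_zero]
  intro T hT
  rw [mem_TSfin] at hT
  have := MTree.internalsS_le_internals S T
  omega

lemma Csum_eq_zero (q : ℕ) (χ : Fin q → Bool) (n k : ℕ) (h : n < k) :
    Csum m S x q χ n k = 0 := by
  rw [Csum, Finset.sum_eq_zero]
  intro c hc
  rw [mem_Cfin] at hc
  obtain ⟨h1, h2⟩ := hc
  exfalso
  have : ∑ i, cond (χ i) ((c i).internalsS S) 0 ≤ ∑ i, (c i).internals := by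
    refine Finset.sum_le_sum fun i _ => ?_
    cases χ i with
    | false => exact Nat.zero_le _
    | true => exact MTree.internalsS_le_internals S (c i)
  omega

end Main

section Cons

variable (m : ℕ) (S : Finset (Fin m)) (x : ℚ)

lemma Csum_cons_true (q : ℕ) (χ : Fin (q+1) → Bool) (hχ : χ 0 = true) (n k : ℕ) :
    Csum m S x (q+1) χ n k
      = ∑ p ∈ Finset.range (n+1) ×ˢ Finset.range (k+1),
          F m S x p.1 p.2 * Csum m S x q (χ ∘ Fin.succ) (n - p.1) (k - p.2) := by
  have hRHS : ∀ p : ℕ × ℕ, F m S x p.1 p.2 * Csum m S x q (χ ∘ Fin.succ) (n - p.1) (k - p.2)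
      = ∑ z ∈ TSfin m S p.1 p.2 ×ˢ Cfin m S q (χ ∘ Fin.succ) (n - p.1) (k - p.2),
          w m S x z.1 * ∏ i, w m S x (z.2 i) := by
    intro p
    rw [F, Csum, Finset.sum_mul_sum, Finset.sum_product]
  rw [Csum]
  simp_rw [hRHS]
  rw [Finset.sum_sigma']
  refine Finset.sum_bij'
    (fun c _ => (⟨((c 0).internals, (c 0).internalsS S), (c 0, Fin.tail c)⟩ :
      (_ : ℕ × ℕ) × (MTree (m+1) × (Fin q → MTree (m+1)))))
    (fun z _ => Fin.cons z.2.1 z.2.2) ?_ ?_ ?_ ?_ ?_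
  · -- hi : image in sigma set
    intro c hc
    rw [mem_Cfin] at hc
    obtain ⟨h1, h2⟩ := hc
    rw [Fin.sum_univ_succ] at h1
    rw [Fin.sum_univ_succ, hχ] at h2
    simp only [cond_true] at h2
    simp only [Finset.mem_sigma, Finset.mem_product, Finset.mem_range, mem_TSfin, mem_Cfin]
    refine ⟨⟨by omega, by omega⟩, ⟨trivial, trivial⟩, ?_, ?_⟩
    · simp only [Fin.tail]; omega
    · simp only [Fin.tail, Function.comp]; omega
  · -- hj : cons in Cfin
    intro z hz
    simp only [Finset.mem_sigma, Finset.mem_product, Finset.mem_range, mem_TSfin,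
      mem_Cfin] at hz
    obtain ⟨⟨ha, hb⟩, ⟨hT1, hT2⟩, hc1, hc2⟩ := hz
    rw [mem_Cfin]
    constructor
    · rw [Fin.sum_univ_succ]
      simp only [Fin.cons_zero, Fin.cons_succ]
      omega
    · rw [Fin.sum_univ_succ, hχ]
      simp only [Fin.cons_zero, Fin.cons_succ, cond_true, Function.comp] at *
      omega
  · intro c _
    exact Fin.cons_self_tail c
  · intro z hz
    simp only [Finset.mem_sigma, Finset.mem_product, Finset.mem_range, mem_TSfin,
      mem_Cfin] at hz
    obtain ⟨⟨ha, hb⟩, ⟨hT1, hT2⟩, hc1, hc2⟩ := hz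
    obtain ⟨⟨a, b⟩, T₀, c'⟩ := z
    simp only [Fin.cons_zero, Fin.tail_cons] at *
    simp [hT1, hT2]
  · intro c _
    rw [Fin.prod_univ_succ]
    rfl

lemma Csum_cons_false (q : ℕ) (χ : Fin (q+1) → Bool) (hχ : χ 0 = false) (n k : ℕ) :
    Csum m S x (q+1) χ n k
      = ∑ a ∈ Finset.range (n+1),
          Ffull m S x a * Csum m S x q (χ ∘ Fin.succ) (n - a) k := by
  have hRHS : ∀ a : ℕ, Ffull m S x a * Csum m S x q (χ ∘ Fin.succ) (n - a) k
      = ∑ z ∈ Tfin m a ×ˢ Cfin m S q (χ ∘ Fin.succ) (n - a) k,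
          w m S x z.1 * ∏ i, w m S x (z.2 i) := by
    intro a
    rw [Ffull, Csum, Finset.sum_mul_sum, Finset.sum_product]
  rw [Csum]
  simp_rw [hRHS]
  rw [Finset.sum_sigma']
  refine Finset.sum_bij'
    (fun c _ => (⟨(c 0).internals, (c 0, Fin.tail c)⟩ :
      (_ : ℕ) × (MTree (m+1) × (Fin q → MTree (m+1)))))
    (fun z _ => Fin.cons z.2.1 z.2.2) ?_ ?_ ?_ ?_ ?_
  · intro c hc
    rw [mem_Cfin] at hc
    obtain ⟨h1, h2⟩ := hc
    rw [Fin.sum_univ_succ] at h1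
    rw [Fin.sum_univ_succ, hχ] at h2
    simp only [cond_false, zero_add] at h2
    simp only [Finset.mem_sigma, Finset.mem_product, Finset.mem_range, mem_Tfin, mem_Cfin]
    refine ⟨by omega, trivial, ?_, ?_⟩
    · simp only [Fin.tail]; omega
    · simp only [Fin.tail, Function.comp]; omega
  · intro z hz
    simp only [Finset.mem_sigma, Finset.mem_product, Finset.mem_range, mem_Tfin,
      mem_Cfin] at hz
    obtain ⟨ha, hT1, hc1, hc2⟩ := hz
    rw [mem_Cfin]
    constructor
    · rw [Fin.sum_univ_succ]
      simp only [Fin.cons_zero, Fin.cons_succ]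
      omega
    · rw [Fin.sum_univ_succ, hχ]
      simp only [Fin.cons_zero, Fin.cons_succ, cond_false, Function.comp] at *
      omega
  · intro c _
    exact Fin.cons_self_tail c
  · intro z hz
    simp only [Finset.mem_sigma, Finset.mem_product, Finset.mem_range, mem_Tfin,
      mem_Cfin] at hz
    obtain ⟨ha, hT1, hc1, hc2⟩ := hz
    obtain ⟨a, T₀, c'⟩ := z
    simp only [Fin.cons_zero, Fin.tail_cons] at *
    simp [hT1]
  · intro c _
    rw [Fin.prod_univ_succ]
    rfl

end Cons

section Conv

variable (m : ℕ) (S : Finset (Fin m)) (x : ℚ)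

/-- number of tracked positions -/
def ptr {q : ℕ} (χ : Fin q → Bool) : ℕ := (Finset.univ.filter (fun i => χ i = true)).card
/-- number of untracked positions -/
def utr {q : ℕ} (χ : Fin q → Bool) : ℕ := (Finset.univ.filter (fun i => χ i = false)).card

lemma ptr_succ {q : ℕ} (χ : Fin (q+1) → Bool) :
    ptr χ = (if χ 0 = true then 1 else 0) + ptr (χ ∘ Fin.succ) := by
  rw [ptr, ptr, Finset.card_filter, Finset.card_filter, Fin.sum_univ_succ]
  rfl

lemma utr_succ {q : ℕ} (χ : Fin (q+1) → Bool) :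
    utr χ = (if χ 0 = false then 1 else 0) + utr (χ ∘ Fin.succ) := by
  rw [utr, utr, Finset.card_filter, Finset.card_filter, Fin.sum_univ_succ]
  rfl

lemma conv (N : ℕ)
    (hjoint : ∀ n ≤ N, ∀ k ≤ n, F m S x n k
      = gA (((m:ℚ)-(S.card:ℚ))*x) x k * gA ((m:ℚ)*x) (((S.card:ℚ)*(k:ℚ))*x) (n-k))
    (hfull : ∀ n ≤ N, Ffull m S x n = gA ((m:ℚ)*x) x n) :
    ∀ (q : ℕ) (χ : Fin q → Bool) (n k : ℕ), n ≤ N → k ≤ n →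
    Csum m S x q χ n k
      = gA (((m:ℚ)-(S.card:ℚ))*x) ((ptr χ : ℚ)*x) k
        * gA ((m:ℚ)*x) ((((S.card:ℚ))*(k:ℚ) + (utr χ : ℚ))*x) (n-k) := by
  set bM : ℚ := ((m:ℚ)-(S.card:ℚ))*x with hbM
  set bm : ℚ := (m:ℚ)*x with hbm
  set sQ : ℚ := (S.card:ℚ) with hsQ
  intro q
  induction q with
  | zero =>
    intro χ n k hnN hkn
    have hp : ptr χ = 0 := by simp [ptr]
    have hu : utr χ = 0 := by simp [utr]
    rw [hp, hu]
    rcases Nat.eq_zero_or_pos k with hk | hk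
    · subst hk
      rcases Nat.eq_zero_or_pos n with hn | hn
      · subst hn
        have hone : Cfin m S 0 χ 0 0 = {fun i => i.elim0} := by
          ext c
          simp only [mem_Cfin, Finset.univ_eq_empty, Finset.sum_empty, true_and,
            Finset.mem_singleton]
          constructor
          · intro _; funext i; exact i.elim0
          · intro _; trivial
        rw [Csum, hone]
        simp [gA_zero]
      · have hempty : Cfin m S 0 χ n 0 = ∅ := by
          ext c
          simp only [mem_Cfin, Finset.univ_eq_empty, Finset.sum_empty,
            Finset.notMem_empty, iff_false]
          omega
        rw [Csum, hempty, Finset.sum_empty]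
        have h0 : ((sQ * ((0:ℕ):ℚ) + ((0:ℕ):ℚ)) * x) = 0 := by push_cast; ring
        rw [h0, gA_a_zero _ _ (show 1 ≤ n - 0 by omega)]
        simp
    · have hempty : Cfin m S 0 χ n k = ∅ := by
        ext c
        simp only [mem_Cfin, Finset.univ_eq_empty, Finset.sum_empty,
          Finset.notMem_empty, iff_false]
        omega
      rw [Csum, hempty, Finset.sum_empty]
      rw [Nat.cast_zero, zero_mul, gA_a_zero _ _ hk, zero_mul]
  | succ q IHq =>
    intro χ n k hnN hkn
    cases hχ0 : χ 0 with
    | true =>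
      set χ' := χ ∘ Fin.succ with hχ'
      have hp : (ptr χ : ℚ) = (ptr χ' : ℚ) + 1 := by
        rw [ptr_succ, hχ0]; simp only [if_pos rfl]; push_cast; ring
      have hu : utr χ = utr χ' := by rw [utr_succ, hχ0]; simp [hχ']
      rw [Csum_cons_true m S x q χ hχ0 n k]
      -- restrict to the image of the reindexing map
      set ψ : ℕ × ℕ → ℕ × ℕ := fun z => (z.2 + z.1, z.1) with hψ
      have hsub : (Finset.range (k+1) ×ˢ Finset.range (n-k+1)).image ψ
          ⊆ Finset.range (n+1) ×ˢ Finset.range (k+1) := by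
        intro z hz
        simp only [Finset.mem_image, Finset.mem_product, Finset.mem_range, hψ] at hz ⊢
        obtain ⟨⟨k₀, j₀⟩, ⟨h1, h2⟩, rfl⟩ := hz
        constructor <;> simp <;> omega
      have hzero : ∀ z ∈ Finset.range (n+1) ×ˢ Finset.range (k+1),
          z ∉ (Finset.range (k+1) ×ˢ Finset.range (n-k+1)).image ψ →
          F m S x z.1 z.2 * Csum m S x q χ' (n - z.1) (k - z.2) = 0 := by
        rintro ⟨n₀, k₀⟩ hz hnotin
        simp only [Finset.mem_product, Finset.mem_range] at hz
        by_cases h1 : k₀ ≤ n₀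
        · by_cases h2 : n₀ - k₀ ≤ n - k
          · exfalso
            apply hnotin
            simp only [Finset.mem_image, Finset.mem_product, Finset.mem_range, hψ]
            exact ⟨(k₀, n₀ - k₀), ⟨by omega, by omega⟩, by simp; omega⟩
          · rw [Csum_eq_zero m S x q χ' _ _ (by omega), mul_zero]
        · rw [F_eq_zero m S x _ _ (by omega), zero_mul]
      rw [← Finset.sum_subset hsub hzero]
      have hinj : ∀ z ∈ Finset.range (k+1) ×ˢ Finset.range (n-k+1),
          ∀ z' ∈ Finset.range (k+1) ×ˢ Finset.range (n-k+1), ψ z = ψ z' → z = z' := by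
        rintro ⟨a, b⟩ - ⟨a', b'⟩ - h
        simp only [hψ, Prod.mk.injEq] at h ⊢
        omega
      rw [Finset.sum_image hinj]
      have hterm : ∀ z ∈ Finset.range (k+1) ×ˢ Finset.range (n-k+1),
          F m S x (ψ z).1 (ψ z).2 * Csum m S x q χ' (n - (ψ z).1) (k - (ψ z).2)
          = (gA bM x z.1 * gA bM ((ptr χ' : ℚ)*x) (k - z.1))
            * (gA bm ((sQ*(z.1:ℚ))*x) z.2
              * gA bm ((sQ*((k:ℚ)-(z.1:ℚ)) + (utr χ' : ℚ))*x) ((n-k) - z.2)) := by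
        rintro ⟨k₀, j₀⟩ hz
        simp only [Finset.mem_product, Finset.mem_range] at hz
        obtain ⟨hk₀, hj₀⟩ := hz
        simp only [hψ]
        rw [hjoint (j₀ + k₀) (by omega) k₀ (by omega),
          IHq χ' (n - (j₀ + k₀)) (k - k₀) (by omega) (by omega)]
        rw [show j₀ + k₀ - k₀ = j₀ by omega,
          show n - (j₀ + k₀) - (k - k₀) = (n-k) - j₀ by omega,
          show ((k - k₀ : ℕ):ℚ) = (k:ℚ) - (k₀:ℚ) by
            rw [Nat.cast_sub (by omega)]]
        ring
      rw [Finset.sum_congr rfl hterm]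
      rw [Finset.sum_product]
      have hinner : ∀ k₀ ∈ Finset.range (k+1),
          ∑ j₀ ∈ Finset.range (n-k+1),
            (gA bM x k₀ * gA bM ((ptr χ' : ℚ)*x) (k - k₀))
            * (gA bm ((sQ*(k₀:ℚ))*x) j₀
              * gA bm ((sQ*((k:ℚ)-(k₀:ℚ)) + (utr χ' : ℚ))*x) ((n-k) - j₀))
          = (gA bM x k₀ * gA bM ((ptr χ' : ℚ)*x) (k - k₀))
            * gA bm (((sQ*(k:ℚ) + (utr χ : ℚ)))*x) (n-k) := by
        intro k₀ _
        rw [← Finset.mul_sum]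
        congr 1
        rw [rothe (n-k) ((sQ*(k₀:ℚ))*x) bm ((sQ*((k:ℚ)-(k₀:ℚ)) + (utr χ' : ℚ))*x)]
        rw [hu]
        exact congrArg (fun z => gA bm z (n-k)) (by ring)
      rw [Finset.sum_congr rfl hinner, ← Finset.sum_mul]
      rw [rothe k x bM ((ptr χ' : ℚ)*x)]
      rw [hp]
      exact congrArg (fun z => gA bM z k * gA bm ((sQ*(k:ℚ) + (utr χ : ℚ))*x) (n-k)) (by ring)
    | false =>
      set χ' := χ ∘ Fin.succ with hχ'
      have hp : (ptr χ : ℚ) = (ptr χ' : ℚ) := by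
        rw [ptr_succ, hχ0]; simp [hχ']
      have hu : (utr χ : ℚ) = (utr χ' : ℚ) + 1 := by
        rw [utr_succ, hχ0]; simp only [if_pos rfl]; push_cast; ring
      rw [Csum_cons_false m S x q χ hχ0 n k]
      have hsub : Finset.range (n-k+1) ⊆ Finset.range (n+1) := by
        intro a ha; simp only [Finset.mem_range] at ha ⊢; omega
      have hzero : ∀ a ∈ Finset.range (n+1), a ∉ Finset.range (n-k+1) →
          Ffull m S x a * Csum m S x q χ' (n - a) k = 0 := by
        intro a ha hnotin
        simp only [Finset.mem_range] at ha hnotin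
        rw [Csum_eq_zero m S x q χ' _ _ (by omega), mul_zero]
      rw [← Finset.sum_subset hsub hzero]
      have hterm : ∀ a ∈ Finset.range (n-k+1),
          Ffull m S x a * Csum m S x q χ' (n - a) k
          = gA bM ((ptr χ' : ℚ)*x) k
            * (gA bm x a * gA bm ((sQ*(k:ℚ) + (utr χ' : ℚ))*x) ((n-k) - a)) := by
        intro a ha
        simp only [Finset.mem_range] at ha
        rw [hfull a (by omega), IHq χ' (n - a) k (by omega) (by omega),
          show n - a - k = (n-k) - a by omega]
        ring
      rw [Finset.sum_congr rfl hterm, ← Finset.mul_sum]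
      rw [rothe (n-k) x bm ((sQ*(k:ℚ) + (utr χ' : ℚ))*x)]
      rw [hp, hu]
      exact congrArg (fun z => gA bM ((ptr χ' : ℚ)*x) k * gA bm z (n-k)) (by ring)

end Conv

section Root

variable (m : ℕ) (S : Finset (Fin m)) (x : ℚ)

lemma F_root (n k : ℕ) (hn : 1 ≤ n) (hk : 1 ≤ k) :
    F m S x n k = fq m S x k *
      Csum m S x (m+1) (fun i => decide (i ∈ (S.image Fin.castSucc)ᶜ)) (n-1) (k-1) := by
  set χS : Fin (m+1) → Bool := fun i => decide (i ∈ (S.image Fin.castSucc)ᶜ) with hχS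
  have hsum : ∀ c : Fin (m+1) → MTree (m+1),
      (∑ i, cond (χS i) ((c i).internalsS S) 0)
        = ∑ i ∈ (S.image Fin.castSucc)ᶜ, (c i).internalsS S := by
    intro c
    rw [Finset.sum_congr rfl (fun i _ => by
      rw [hχS, Bool.cond_decide])]
    rw [Finset.sum_ite_mem, Finset.univ_inter]
  have himg : TSfin m S n k = (Cfin m S (m+1) χS (n-1) (k-1)).image MTree.node := by
    ext T
    simp only [mem_TSfin, Finset.mem_image, mem_Cfin]
    constructor
    · rintro ⟨h1, h2⟩
      cases T with
      | leaf =>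
        exfalso
        have h0 : (MTree.leaf : MTree (m+1)).internals = 0 := rfl
        omega
      | node c =>
        refine ⟨c, ⟨?_, ?_⟩, rfl⟩
        · simp only [MTree.internals] at h1
          omega
        · rw [hsum]
          simp only [MTree.internalsS] at h2
          omega
    · rintro ⟨c, ⟨h1, h2⟩, rfl⟩
      rw [hsum] at h2
      constructor
      · simp only [MTree.internals]
        omega
      · simp only [MTree.internalsS]
        omega
  rw [F, himg, Finset.sum_image (fun a _ b _ h => by injection h)]
  rw [Csum, Finset.mul_sum]
  refine Finset.sum_congr rfl fun c hc => ?_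
  rw [mem_Cfin] at hc
  obtain ⟨h1, h2⟩ := hc
  rw [hsum] at h2
  rw [w_node]
  congr 2
  simp only [MTree.internalsS]
  omega

lemma Ffull_fiber (n : ℕ) :
    Ffull m S x n = ∑ k ∈ Finset.range (n+1), F m S x n k := by
  rw [Ffull, ← Finset.sum_fiberwise_of_maps_to (g := fun T => T.internalsS S)
    (t := Finset.range (n+1)) (fun T hT => by
      rw [mem_Tfin] at hT
      rw [Finset.mem_range]
      show T.internalsS S < n + 1
      have := MTree.internalsS_le_internals S T
      omega) (w m S x)]
  refine Finset.sum_congr rfl fun k _ => ?_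
  refine Finset.sum_congr ?_ fun _ _ => rfl
  ext T
  simp only [Finset.mem_filter, mem_Tfin, mem_TSfin]

/-- The main joint induction. -/
theorem main_joint : ∀ n : ℕ,
    (∀ k ≤ n, F m S x n k
      = gA (((m:ℚ)-(S.card:ℚ))*x) x k * gA ((m:ℚ)*x) (((S.card:ℚ)*(k:ℚ))*x) (n-k))
    ∧ Ffull m S x n = gA ((m:ℚ)*x) x n := by
  have hsm' : S.card ≤ m := by simpa using Finset.card_le_univ S
  have hsm : (S.card : ℚ) ≤ (m:ℚ) := by exact_mod_cast hsm'

  set bM : ℚ := ((m:ℚ)-(S.card:ℚ))*x with hbM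
  set bm : ℚ := (m:ℚ)*x with hbm
  set sQ : ℚ := (S.card:ℚ) with hsQ
  intro n
  induction n using Nat.strong_induction_on with
  | _ n IH =>
    rcases Nat.eq_zero_or_pos n with rfl | hn
    · constructor
      · intro k hk
        interval_cases k
        have hTS : TSfin m S 0 0 = {MTree.leaf} := by
          ext T
          simp only [mem_TSfin, Finset.mem_singleton]
          constructor
          · rintro ⟨h1, -⟩
            exact (MTree.internals_eq_zero_iff T).mp h1
          · rintro rfl
            exact ⟨rfl, rfl⟩
        rw [F, hTS, Finset.sum_singleton, w_leaf]
        simp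
      · have hT : Tfin m 0 = {MTree.leaf} := by
          ext T
          simp only [mem_Tfin, Finset.mem_singleton]
          exact MTree.internals_eq_zero_iff T
        rw [Ffull, hT, Finset.sum_singleton, w_leaf]
        simp
    · have hjoint : ∀ n' ≤ n - 1, ∀ k ≤ n', F m S x n' k
          = gA bM x k * gA bm ((sQ*(k:ℚ))*x) (n'-k) :=
        fun n' hn' k hk => (IH n' (by omega)).1 k hk
      have hfull : ∀ n' ≤ n - 1, Ffull m S x n' = gA bm x n' :=
        fun n' hn' => (IH n' (by omega)).2
      have hjointn : ∀ k ≤ n, F m S x n k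
          = gA bM x k * gA bm ((sQ*(k:ℚ))*x) (n-k) := by
        intro k hkn
        rcases Nat.eq_zero_or_pos k with rfl | hk
        · have hTS : TSfin m S n 0 = ∅ := by
            ext T
            simp only [mem_TSfin, Finset.notMem_empty, iff_false, not_and]
            intro h1 h2
            have := (MTree.internalsS_eq_zero_iff S T).mp h2
            subst this
            simp [MTree.internals] at h1
            omega
          rw [F, hTS, Finset.sum_empty]
          rw [show (sQ*((0:ℕ):ℚ))*x = 0 by push_cast; ring]
          rw [gA_a_zero _ _ (by omega : 1 ≤ n - 0)]
          simp
        · rw [F_root m S x n k hn hk]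
          rw [conv m S x (n-1) hjoint hfull (m+1) _ (n-1) (k-1) (le_refl _) (by omega)]
          have hptr : ptr (fun i : Fin (m+1) => decide (i ∈ (S.image Fin.castSucc)ᶜ))
              = m + 1 - S.card := by
            rw [ptr]
            have : Finset.univ.filter
                (fun i : Fin (m+1) => decide (i ∈ (S.image Fin.castSucc)ᶜ) = true)
                = (S.image Fin.castSucc)ᶜ := by
              ext i; simp
            rw [this, Finset.card_compl,
              Finset.card_image_of_injective _ (Fin.castSucc_injective m),
              Fintype.card_fin]
          have hutr : utr (fun i : Fin (m+1) => decide (i ∈ (S.image Fin.castSucc)ᶜ))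
              = S.card := by
            rw [utr]
            have : Finset.univ.filter
                (fun i : Fin (m+1) => decide (i ∈ (S.image Fin.castSucc)ᶜ) = false)
                = S.image Fin.castSucc := by
              ext i; simp
            rw [this, Finset.card_image_of_injective _ (Fin.castSucc_injective m)]
          rw [hptr, hutr]
          have hc1 : ((m + 1 - S.card : ℕ) : ℚ) = ((m:ℚ) - sQ) + 1 := by
            rw [Nat.cast_sub (by omega)]
            push_cast
            ring
          have hc2 : (sQ*((k-1 : ℕ):ℚ) + (S.card:ℚ))*x = (sQ*(k:ℚ))*x := by
            rw [Nat.cast_sub (by omega : 1 ≤ k)]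
            push_cast
            ring
          have hc3 : (n-1) - (k-1) = n - k := by omega
          rw [hc1, hc2, hc3]
          rw [← mul_assoc]
          congr 1
          have hM1 : ((m:ℚ) - sQ) + 1 ≠ 0 := by
            have : (0:ℚ) ≤ (m:ℚ) - sQ := by linarith
            linarith
          have := stepdown ((m:ℚ) - sQ) x hM1 k hk
          rw [← this]
          rfl
      refine ⟨hjointn, ?_⟩
      have hbmc : bm = bM + sQ*x := by rw [hbm, hbM]; ring
      rw [Ffull_fiber]
      have hstep : ∀ k ∈ Finset.range (n+1), F m S x n k
          = gA bM x k * gA (bM + sQ*x) ((sQ*x)*(k:ℚ) + 0) (n-k) := by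
        intro k hk
        rw [Finset.mem_range] at hk
        rw [hjointn k (by omega), hbmc]
        exact congrArg (fun z => gA bM x k * gA (bM + sQ*x) z (n-k)) (by ring)
      rw [Finset.sum_congr rfl hstep, master n x bM (sQ*x) 0, ← hbmc, add_zero]

end Root

lemma hookProdS_eval {m : ℕ} (S : Finset (Fin m)) (f : ℕ → ℚ[X]) (r : ℚ) :
    ∀ T : MTree (m+1), (MTree.hookProdS S f T).eval r
      = MTree.hookProdS S (fun h => (f h).eval r) T := by
  intro T
  induction T with
  | leaf => simp [MTree.hookProdS]
  | node c ih =>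
    simp only [MTree.hookProdS, Polynomial.eval_mul, Polynomial.eval_prod]
    congr 1
    exact Finset.prod_congr rfl fun i _ => ih i

lemma RHS_eval (m n : ℕ) (hn : 1 ≤ n) (r : ℚ) :
    ((m:ℚ)*(n:ℚ)+1)⁻¹ * ((n.factorial:ℚ))⁻¹ * ∏ j ∈ Finset.range n, (((m:ℚ)*(n:ℚ)+1)*r - (j:ℚ))
      = gA ((m:ℚ)*r) r n := by
  obtain ⟨N, rfl⟩ : ∃ N, n = N + 1 := ⟨n-1, by omega⟩
  rw [gA_succ]
  have hid : (algebraMap ℚ ℚ) (((N+1).factorial : ℚ))⁻¹ = ((N+1).factorial : ℚ)⁻¹ := rfl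
  rw [hid]
  have hsplit : ∏ j ∈ Finset.range (N+1), (((m:ℚ)*((N+1:ℕ):ℚ)+1)*r - (j:ℚ))
      = (∏ j ∈ Finset.range N, (((m:ℚ)*((N+1:ℕ):ℚ)+1)*r - ((j+1:ℕ):ℚ)))
        * (((m:ℚ)*((N+1:ℕ):ℚ)+1)*r - ((0:ℕ):ℚ)) :=
    Finset.prod_range_succ' (fun j : ℕ => ((m:ℚ)*((N+1:ℕ):ℚ)+1)*r - (j:ℚ)) N
  rw [hsplit]
  have hprodeq : ∏ j ∈ Finset.range N, (((m:ℚ)*((N+1:ℕ):ℚ)+1)*r - ((j+1:ℕ):ℚ))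
      = ∏ j ∈ Finset.range N, (r + (((N:ℕ):ℚ)+1) * ((m:ℚ)*r) - ((j:ℚ)+1)) := by
    refine Finset.prod_congr rfl fun j _ => ?_
    push_cast
    ring
  rw [hprodeq]
  have hne : ((m:ℚ)*((N+1:ℕ):ℚ)+1) ≠ 0 := by positivity
  have hfZ : ((N+1).factorial : ℚ) ≠ 0 := by positivity
  field_simp
  ring

/-- **Theorem 1.2, second form (Sun–Zhang).**  For `m ≥ 1`, `n ≥ 1` and `S ⊆ [m]`
with `s = |S|`,
`∑_{T ∈ 𝒯_{n,m+1}} ∏_{v ∈ 𝓘(T)} (((m-s)ℍ_v^S + 1)x - ℍ_v^S + 1)/((m-s+1)ℍ_v^S)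
  = (1/(mn+1)) ⬝ C((mn+1)x, n)` in `ℚ[x]`, where
`C(y,n) = y(y-1)⋯(y-n+1)/n!`. -/
theorem hook_length_formula_second_kind' (m n : ℕ) (hm : 1 ≤ m) (hn : 1 ≤ n)
    (S : Finset (Fin m)) :
    (∑ᶠ T ∈ {T : MTree (m + 1) | T.internals = n},
        MTree.hookProdS S (fun h =>
          C ((((m : ℚ) - (S.card : ℚ) + 1) * (h : ℚ))⁻¹) *
            (C (((m : ℚ) - (S.card : ℚ)) * (h : ℚ) + 1) * (X : ℚ[X]) -
              C ((h : ℚ) - 1))) T)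
      = C (((m : ℚ) * n + 1)⁻¹ * (n.factorial : ℚ)⁻¹) *
          ∏ j ∈ Finset.range n,
            (C ((m : ℚ) * n + 1) * (X : ℚ[X]) - C (j : ℚ)) := by
  have hfin := MTree.finite_internals_eq (m+1) n
  rw [finsum_mem_eq_finite_toFinset_sum _ hfin]
  apply Polynomial.funext
  intro r
  rw [Polynomial.eval_finset_sum]
  have h1 : ∑ T ∈ hfin.toFinset, (MTree.hookProdS S (fun h =>
        C ((((m : ℚ) - (S.card : ℚ) + 1) * (h : ℚ))⁻¹) *
          (C (((m : ℚ) - (S.card : ℚ)) * (h : ℚ) + 1) * (X : ℚ[X]) -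
            C ((h : ℚ) - 1))) T).eval r = Ffull m S r n := by
    rw [Ffull]
    refine Finset.sum_congr rfl fun T _ => ?_
    rw [hookProdS_eval]
    have hfun : (fun h : ℕ => (C ((((m : ℚ) - (S.card : ℚ) + 1) * (h : ℚ))⁻¹) *
        (C (((m : ℚ) - (S.card : ℚ)) * (h : ℚ) + 1) * (X : ℚ[X]) -
          C ((h : ℚ) - 1))).eval r) = fq m S r := by
      funext h
      simp [fq]
    rw [hfun]
    rfl
  rw [h1, (main_joint m S r n).2]
  rw [Polynomial.eval_mul, Polynomial.eval_C, Polynomial.eval_prod]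
  have h2 : ∀ j ∈ Finset.range n,
      (C ((m : ℚ) * n + 1) * (X : ℚ[X]) - C (j : ℚ)).eval r
        = ((m:ℚ)*(n:ℚ)+1)*r - (j:ℚ) := by
    intro j _
    simp
  rw [Finset.prod_congr rfl h2]
  exact (RHS_eval m n hn r).symm
end
end

section
/- For any integers m ≥ 2 and n ≥ 1, the sum over all complete m-ary trees T with n internal vertices of the product over all internal vertices v of T of 1/𝓗_v equals (m^n/(mn+1)) · C((mn+1)/m, n), where C(y, n) = y(y−1)⋯(y−n+1)/n! is the generalized binomial coefficient (here y = (mn+1)/m ∈ ℚ). -/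
open Polynomial Finset

section HookProof

open PowerSeries

noncomputable section

def eseq (m : ℕ) : ℕ → ℚ := fun n =>
  (∏ k ∈ Finset.range n, ((m : ℚ)⁻¹ + k)) * m ^ n / n.factorial

lemma eseq_zero (m : ℕ) : eseq m 0 = 1 := by simp [eseq]

lemma eseq_succ (m : ℕ) (hm : 1 ≤ m) (n : ℕ) :
    ((n : ℚ) + 1) * eseq m (n + 1) = ((m : ℚ) * n + 1) * eseq m n := by
  have hm0 : (m : ℚ) ≠ 0 := by positivity
  have hf : ((n.factorial : ℚ)) ≠ 0 := by exact_mod_cast n.factorial_ne_zero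
  simp only [eseq, prod_range_succ, Nat.factorial_succ]
  push_cast
  field_simp
  ring

/-- The generating series of `eseq`. -/
def Ee (m : ℕ) : ℚ⟦X⟧ := PowerSeries.mk (eseq m)

lemma deriv_Ee (m : ℕ) (hm : 1 ≤ m) :
    (1 - PowerSeries.C (R := ℚ) (m : ℚ) * PowerSeries.X) * d⁄dX ℚ (Ee m) = Ee m := by
  ext n
  rw [sub_mul, one_mul, map_sub, mul_assoc, PowerSeries.coeff_C_mul]
  rcases n with _ | n
  · simp only [PowerSeries.coeff_derivative, Ee, PowerSeries.coeff_mk, PowerSeries.coeff_zero_X_mul, ]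
    have h0 := eseq_succ m hm 0
    push_cast at h0 ⊢
    simp at h0 ⊢
    linarith [h0]
  · rw [PowerSeries.coeff_succ_X_mul, PowerSeries.coeff_derivative, PowerSeries.coeff_derivative]
    simp only [Ee, PowerSeries.coeff_mk]
    have h := eseq_succ m hm (n + 1)
    have h' := eseq_succ m hm n
    push_cast at h h' ⊢
    nlinarith [h, h']

lemma pow_Ee_mul (p : ℕ) :
    Ee (p + 1) ^ (p + 1) * (1 - PowerSeries.C (R := ℚ) ((p : ℚ) + 1) * PowerSeries.X) = 1 := by
  set c : ℚ := (p : ℚ) + 1 with hc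
  have hE : (1 - PowerSeries.C (R := ℚ) c * PowerSeries.X) * d⁄dX ℚ (Ee (p + 1)) = Ee (p + 1) := by
    have := deriv_Ee (p + 1) (Nat.le_add_left 1 p)
    rwa [Nat.cast_add, Nat.cast_one] at this
  apply derivative.ext
  · rw [Derivation.leibniz, Derivation.leibniz_pow, Derivation.map_one_eq_zero]
    have hdX : d⁄dX ℚ (1 - PowerSeries.C (R := ℚ) c * PowerSeries.X) = - PowerSeries.C (R := ℚ) c := by
      rw [map_sub, Derivation.map_one_eq_zero, Derivation.leibniz, PowerSeries.derivative_X, PowerSeries.derivative_C]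
      simp
    have hCc : PowerSeries.C (R := ℚ) c = ((p : ℚ⟦X⟧) + 1) := by
      rw [hc]
      push_cast
      simp [map_add, map_one, map_natCast]
    rw [hdX]
    simp only [smul_eq_mul, nsmul_eq_mul, Nat.add_sub_cancel, hCc]
    push_cast
    rw [hCc] at hE
    linear_combination ((p : ℚ⟦X⟧) + 1) * Ee (p + 1) ^ p * hE
  · simp [map_mul, map_pow, map_sub, Ee, PowerSeries.constantCoeff_mk, eseq_zero, PowerSeries.constantCoeff_X]

lemma deriv_Ee_pow (p : ℕ) : d⁄dX ℚ (Ee (p + 1)) = Ee (p + 1) ^ (p + 2) := by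
  have hE : (1 - PowerSeries.C (R := ℚ) ((p : ℚ) + 1) * PowerSeries.X) * d⁄dX ℚ (Ee (p + 1)) = Ee (p + 1) := by
    have := deriv_Ee (p + 1) (Nat.le_add_left 1 p)
    rwa [Nat.cast_add, Nat.cast_one] at this
  calc d⁄dX ℚ (Ee (p + 1))
      = d⁄dX ℚ (Ee (p + 1)) * (Ee (p + 1) ^ (p + 1) * (1 - PowerSeries.C (R := ℚ) ((p : ℚ) + 1) * PowerSeries.X)) := by
        rw [pow_Ee_mul, mul_one]
    _ = ((1 - PowerSeries.C (R := ℚ) ((p : ℚ) + 1) * PowerSeries.X) * d⁄dX ℚ (Ee (p + 1))) * Ee (p + 1) ^ (p + 1) := by ring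
    _ = Ee (p + 1) ^ (p + 2) := by rw [hE]; ring

/-- The integral of `Ee ^ p`. -/
def Jser (p : ℕ) : ℚ⟦X⟧ :=
  PowerSeries.mk fun j => if j = 0 then 0 else (PowerSeries.coeff (j - 1) (Ee (p + 1) ^ p)) / j

lemma deriv_Jser (p : ℕ) : d⁄dX ℚ (Jser p) = Ee (p + 1) ^ p := by
  ext n
  rw [PowerSeries.coeff_derivative, Jser, PowerSeries.coeff_mk]
  have : (n : ℚ) + 1 ≠ 0 := by positivity
  field_simp
  simp [div_mul_cancel₀ _ this]

lemma constantCoeff_Jser (p : ℕ) : constantCoeff (Jser p) = 0 := by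
  simp [Jser, PowerSeries.constantCoeff_mk]

lemma key_Ee (p : ℕ) : Ee (p + 1) = 1 + Jser p * Ee (p + 1) := by
  set G : ℚ⟦X⟧ := Ee (p + 1) - (1 + Jser p * Ee (p + 1)) with hG
  have hG' : d⁄dX ℚ G = Ee (p + 1) ^ (p + 1) * G := by
    rw [hG, map_sub, map_add, Derivation.map_one_eq_zero, Derivation.leibniz,
      smul_eq_mul, smul_eq_mul, deriv_Ee_pow, deriv_Jser]
    ring
  have hzero : ∀ n, PowerSeries.coeff n G = 0 := by
    intro n
    induction n using Nat.strong_induction_on with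
    | _ n ih =>
      match n with
      | 0 =>
        rw [PowerSeries.coeff_zero_eq_constantCoeff, hG, map_sub, map_add, map_mul, constantCoeff_Jser]
        simp [Ee, PowerSeries.constantCoeff_mk, eseq_zero]
      | n + 1 =>
        have h1 : PowerSeries.coeff n (d⁄dX ℚ G) = 0 := by
          rw [hG', PowerSeries.coeff_mul]
          refine Finset.sum_eq_zero fun x hx => ?_
          rw [ih x.2 (by have := Finset.HasAntidiagonal.mem_antidiagonal.mp hx; omega)]
          ring
        rw [PowerSeries.coeff_derivative] at h1
        have hne : ((n : ℚ) + 1) ≠ 0 := by positivity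
        have := mul_eq_zero.mp h1
        tauto
  have hG0 : G = 0 := by ext n; simpa using hzero n
  rw [hG] at hG0
  exact (sub_eq_zero.mp hG0).symm.symm

lemma eseq_rec (p n : ℕ) :
    eseq (p + 1) (n + 1) = ∑ x ∈ Finset.HasAntidiagonal.antidiagonal n,
      ((x.1 : ℚ) + 1)⁻¹ * (PowerSeries.coeff x.1 (Ee (p + 1) ^ p)) * eseq (p + 1) x.2 := by
  have h := congrArg (PowerSeries.coeff (n + 1)) (key_Ee p)
  rw [map_add, PowerSeries.coeff_mul, Finset.Nat.sum_antidiagonal_succ] at h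
  simp only [Ee, Jser, PowerSeries.coeff_mk, PowerSeries.coeff_one] at h
  norm_num at h
  rw [h]
  refine Finset.sum_congr rfl fun x hx => ?_
  simp only [Nat.add_sub_cancel, Ee]
  push_cast
  ring


end

namespace HookTree

open MTree

variable {m : ℕ}

def height {m : ℕ} : MTree m → ℕ
  | MTree.leaf => 0
  | MTree.node c => 1 + Finset.univ.sup fun i => height (c i)

lemma height_le_internals : ∀ T : MTree m, height T ≤ T.internals
  | MTree.leaf => le_refl 0
  | MTree.node c => by
      simp only [height, internals]
      refine add_le_add_right (Finset.sup_le fun i _ => ?_) 1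
      exact le_trans (height_le_internals (c i))
        (Finset.single_le_sum (f := fun i => (c i).internals)
          (fun i _ => Nat.zero_le _) (Finset.mem_univ i))

lemma finite_height_le : ∀ d : ℕ, {T : MTree m | height T ≤ d}.Finite := by
  intro d
  induction d with
  | zero =>
    refine Set.Finite.subset (Set.finite_singleton MTree.leaf) fun T hT => ?_
    cases T with
    | leaf => rfl
    | node c => simp [height] at hT
  | succ d ih =>
    refine Set.Finite.subset (Set.Finite.union (Set.finite_singleton MTree.leaf)
      (Set.Finite.image MTree.node (Set.Finite.pi fun _ : Fin m => ih))) fun T hT => ?_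
    cases T with
    | leaf => exact Or.inl rfl
    | node c =>
      refine Or.inr ⟨c, fun i _ => ?_, rfl⟩
      simp only [height, Set.mem_setOf_eq] at hT ⊢
      have : (Finset.univ.sup fun i => height (c i)) ≤ d := by omega
      exact le_trans (Finset.le_sup (f := fun i => height (c i)) (Finset.mem_univ i)) this

lemma finite_internals_le (N : ℕ) : {T : MTree m | T.internals ≤ N}.Finite :=
  (finite_height_le N).subset fun T hT => le_trans (height_le_internals T) hT

open scoped Classical in
noncomputable def Tset (m n : ℕ) : Finset (MTree m) :=
  (finite_internals_le (m := m) n).toFinset.filter fun T => T.internals = n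

lemma mem_Tset {n : ℕ} {T : MTree m} : T ∈ Tset m n ↔ T.internals = n := by
  classical
  simp only [Tset, Finset.mem_filter, Set.Finite.mem_toFinset, Set.mem_setOf_eq]
  exact ⟨fun h => h.2, fun h => ⟨le_of_eq h, h⟩⟩

open scoped Classical in
noncomputable def Dset (m q j : ℕ) : Finset (Fin q → MTree m) :=
  (Fintype.piFinset fun _ => (finite_internals_le (m := m) j).toFinset).filter
    fun d => ∑ i, (d i).internals = j

lemma mem_Dset {q j : ℕ} {d : Fin q → MTree m} :
    d ∈ Dset m q j ↔ ∑ i, (d i).internals = j := by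
  classical
  simp only [Dset, Finset.mem_filter, Fintype.mem_piFinset, Set.Finite.mem_toFinset,
    Set.mem_setOf_eq]
  refine ⟨fun h => h.2, fun h => ⟨fun i => ?_, h⟩⟩
  exact h ▸ Finset.single_le_sum (f := fun i => (d i).internals)
    (fun i _ => Nat.zero_le _) (Finset.mem_univ i)

noncomputable def w {m : ℕ} : MTree m → ℚ := hookProd1 fun h => ((h : ℚ))⁻¹

noncomputable def aseq (m n : ℕ) : ℚ := ∑ T ∈ Tset m n, w T

noncomputable def bseq (m q j : ℕ) : ℚ := ∑ d ∈ Dset m q j, ∏ i, w (d i)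

lemma Tset_zero : Tset m 0 = {MTree.leaf} := by
  ext T
  rw [mem_Tset, Finset.mem_singleton]
  cases T with
  | leaf => simp [internals]
  | node c => simp [internals]

lemma aseq_zero : aseq m 0 = 1 := by
  rw [aseq, Tset_zero, Finset.sum_singleton]
  rfl

lemma sum_Dset_split (p j : ℕ) (F : (Fin p → MTree m) → MTree m → ℚ) :
    ∑ d ∈ Dset m (p + 1) j, F (Fin.init d) (d (Fin.last p)) =
      ∑ x ∈ Finset.HasAntidiagonal.antidiagonal j, ∑ d1 ∈ Dset m p x.1, ∑ t ∈ Tset m x.2, F d1 t := by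
  have hsig : ∀ x : ℕ × ℕ, (∑ d1 ∈ Dset m p x.1, ∑ t ∈ Tset m x.2, F d1 t)
      = ∑ q ∈ Dset m p x.1 ×ˢ Tset m x.2, F q.1 q.2 := fun x =>
    (Finset.sum_product (f := fun q : (Fin p → MTree m) × MTree m => F q.1 q.2) ..).symm
  simp only [hsig]
  rw [← Finset.sum_sigma (Finset.HasAntidiagonal.antidiagonal j)
    (fun x => Dset m p x.1 ×ˢ Tset m x.2) (fun z => F z.2.1 z.2.2)]
  refine (Finset.sum_nbij'
    (fun d => (⟨(∑ i, (Fin.init d i).internals, (d (Fin.last p)).internals),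
        (Fin.init d, d (Fin.last p))⟩ :
        (_ : ℕ × ℕ) × ((Fin p → MTree m) × MTree m)))
    (fun z => Fin.snoc z.2.1 z.2.2) ?_ ?_ ?_ ?_ ?_).symm.symm
  · intro d hd
    rw [mem_Dset] at hd
    rw [Finset.mem_sigma, Finset.mem_product, Finset.HasAntidiagonal.mem_antidiagonal, mem_Dset, mem_Tset]
    refine ⟨?_, rfl, rfl⟩
    rw [← hd, Fin.sum_univ_castSucc]
    rfl
  · intro z hz
    rw [Finset.mem_sigma, Finset.mem_product, Finset.HasAntidiagonal.mem_antidiagonal, mem_Dset, mem_Tset] at hz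
    rw [mem_Dset, Fin.sum_univ_castSucc]
    simp only [Fin.snoc_castSucc, Fin.snoc_last]
    rw [hz.2.1, hz.2.2, hz.1]
  · intro d hd
    simp [Fin.snoc_init_self]
  · intro z hz
    rw [Finset.mem_sigma, Finset.mem_product, Finset.HasAntidiagonal.mem_antidiagonal, mem_Dset, mem_Tset] at hz
    have h1 : Fin.init (Fin.snoc z.2.1 z.2.2 : Fin (p + 1) → MTree m) = z.2.1 := Fin.init_snoc _ _
    have h2 : (Fin.snoc z.2.1 z.2.2 : Fin (p + 1) → MTree m) (Fin.last p) = z.2.2 :=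
      Fin.snoc_last _ _
    have hx : ((∑ i, ((Fin.init (Fin.snoc z.2.1 z.2.2 : Fin (p + 1) → MTree m)) i).internals,
        ((Fin.snoc z.2.1 z.2.2 : Fin (p + 1) → MTree m) (Fin.last p)).internals) : ℕ × ℕ)
        = z.1 := by
      rw [h1, h2, hz.2.1, hz.2.2]
    refine Sigma.ext hx ?_
    show HEq ((Fin.init (Fin.snoc z.2.1 z.2.2 : Fin (p + 1) → MTree m)),
      (Fin.snoc z.2.1 z.2.2 : Fin (p + 1) → MTree m) (Fin.last p)) z.2
    rw [h1, h2]
  · intro d hd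
    rfl

lemma bseq_zero (j : ℕ) : bseq m 0 j = if j = 0 then 1 else 0 := by
  rcases Nat.eq_zero_or_pos j with rfl | hj
  · rw [if_pos rfl, bseq]
    have : Dset m 0 0 = {fun i : Fin 0 => i.elim0} := by
      ext d
      rw [mem_Dset, Finset.mem_singleton]
      simp only [Finset.univ_eq_empty, Finset.sum_empty, true_iff]
      funext i
      exact i.elim0
    rw [this, Finset.sum_singleton]
    simp
  · rw [if_neg (by omega), bseq]
    have : Dset m 0 j = ∅ := by
      ext d
      rw [mem_Dset]
      simp only [Finset.univ_eq_empty, Finset.sum_empty, Finset.notMem_empty, iff_false]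
      omega
    rw [this, Finset.sum_empty]

lemma bseq_succ (p j : ℕ) :
    bseq m (p + 1) j = ∑ x ∈ Finset.HasAntidiagonal.antidiagonal j, bseq m p x.1 * aseq m x.2 := by
  rw [bseq]
  have h1 : ∀ d : Fin (p + 1) → MTree m,
      (∏ i, w (d i)) = (∏ i, w (Fin.init d i)) * w (d (Fin.last p)) := fun d =>
    Fin.prod_univ_castSucc fun i => w (d i)
  rw [Finset.sum_congr rfl fun d _ => h1 d,
    sum_Dset_split p j fun d1 t => (∏ i, w (d1 i)) * w t]
  refine Finset.sum_congr rfl fun x _ => ?_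
  rw [bseq, aseq, Finset.sum_mul_sum]

/-- The children of a tree (arbitrary for a leaf). -/
def children {m : ℕ} : MTree m → (Fin m → MTree m)
  | MTree.leaf => fun _ => MTree.leaf
  | MTree.node c => c

lemma hook_filter_sum {p : ℕ} (g : Fin (p + 1) → ℕ) :
    ∑ i ∈ Finset.univ.filter (fun i : Fin (p + 1) => (i : ℕ) + 1 < p + 1), g i
      = ∑ i : Fin p, g i.castSucc := by
  have hfil : Finset.univ.filter (fun i : Fin (p + 1) => (i : ℕ) + 1 < p + 1)
      = Finset.univ.map Fin.castSuccEmb := by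
    ext i
    simp only [Finset.mem_filter, Finset.mem_univ, true_and, Finset.mem_map,
      Fin.coe_castSuccEmb]
    constructor
    · intro h
      have hne : i ≠ Fin.last p := by
        intro hl
        subst hl
        simp only [Fin.val_last] at h
        omega
      obtain ⟨y, hy⟩ := Fin.exists_castSucc_eq.mpr hne
      exact ⟨y, hy⟩
    · rintro ⟨y, -, rfl⟩
      simp only [Fin.coe_castSucc]
      omega
  rw [hfil, Finset.sum_map]
  rfl

lemma aseq_rec (p n : ℕ) :
    aseq (p + 1) (n + 1) = ∑ x ∈ Finset.HasAntidiagonal.antidiagonal n,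
      ((x.1 : ℚ) + 1)⁻¹ * bseq (p + 1) p x.1 * aseq (p + 1) x.2 := by
  rw [aseq]
  -- step 1: reindex by children
  have step1 : ∑ T ∈ Tset (p + 1) (n + 1), w T
      = ∑ c ∈ Dset (p + 1) (p + 1) n, w (MTree.node c) := by
    refine Finset.sum_nbij' children MTree.node ?_ ?_ ?_ ?_ ?_
    · intro T hT
      rw [mem_Tset] at hT
      cases T with
      | leaf => simp [internals] at hT
      | node c =>
        rw [mem_Dset]
        simp only [internals] at hT
        simpa [children] using (by omega : ∑ i, (c i).internals = n)
    · intro c hc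
      rw [mem_Dset] at hc
      rw [mem_Tset]
      simp only [internals, hc]
      omega
    · intro T hT
      rw [mem_Tset] at hT
      cases T with
      | leaf => simp [internals] at hT
      | node c => rfl
    · intro c hc
      rfl
    · intro T hT
      rw [mem_Tset] at hT
      cases T with
      | leaf => simp [internals] at hT
      | node c => rfl
  rw [step1]
  -- step 2: unfold w (node c) and split last child
  have step2 : ∀ c : Fin (p + 1) → MTree (p + 1), w (MTree.node c)
      = ((1 + ∑ i, (Fin.init c i).internals : ℕ) : ℚ)⁻¹
          * ((∏ i, w (Fin.init c i)) * w (c (Fin.last p))) := by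
    intro c
    show (((hook1 c : ℕ) : ℚ))⁻¹ * ∏ i, w (c i) = _
    rw [hook1, hook_filter_sum fun i => (c i).internals,
      Fin.prod_univ_castSucc fun i => w (c i)]
    rfl
  rw [Finset.sum_congr rfl fun c _ => step2 c,
    sum_Dset_split p n fun d1 t =>
      ((1 + ∑ i, (d1 i).internals : ℕ) : ℚ)⁻¹ * ((∏ i, w (d1 i)) * w t)]
  refine Finset.sum_congr rfl fun x hx => ?_
  have hin : ∀ d1 ∈ Dset (p + 1) p x.1, ∀ t ∈ Tset (p + 1) x.2,
      ((1 + ∑ i, (d1 i).internals : ℕ) : ℚ)⁻¹ * ((∏ i, w (d1 i)) * w t)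
        = ((x.1 : ℚ) + 1)⁻¹ * ((∏ i, w (d1 i)) * w t) := by
    intro d1 hd1 t ht
    rw [mem_Dset] at hd1
    rw [hd1]
    push_cast
    ring_nf
  calc ∑ d1 ∈ Dset (p + 1) p x.1, ∑ t ∈ Tset (p + 1) x.2,
        ((1 + ∑ i, (d1 i).internals : ℕ) : ℚ)⁻¹ * ((∏ i, w (d1 i)) * w t)
      = ∑ d1 ∈ Dset (p + 1) p x.1, ∑ t ∈ Tset (p + 1) x.2,
        ((x.1 : ℚ) + 1)⁻¹ * ((∏ i, w (d1 i)) * w t) := by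
        refine Finset.sum_congr rfl fun d1 hd1 => Finset.sum_congr rfl fun t ht => ?_
        exact hin d1 hd1 t ht
    _ = ((x.1 : ℚ) + 1)⁻¹ * bseq (p + 1) p x.1 * aseq (p + 1) x.2 := by
        simp only [bseq, aseq, Finset.sum_mul, Finset.mul_sum]
        rw [Finset.sum_comm]
        exact Finset.sum_congr rfl fun t _ => Finset.sum_congr rfl fun d1 _ => by ring



open PowerSeries in
lemma aseq_eq_eseq (p : ℕ) : ∀ n, aseq (p + 1) n = eseq (p + 1) n := by
  intro n
  induction n using Nat.strong_induction_on with
  | _ n ih =>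
    match n, ih with
    | 0, _ => rw [aseq_zero, eseq_zero]
    | n + 1, ih =>
      have hb : ∀ q j, j ≤ n → bseq (p + 1) q j = PowerSeries.coeff j (Ee (p + 1) ^ q) := by
        intro q
        induction q with
        | zero =>
          intro j hj
          rw [bseq_zero, pow_zero, PowerSeries.coeff_one]
        | succ q ihq =>
          intro j hj
          rw [bseq_succ, pow_succ, PowerSeries.coeff_mul]
          refine Finset.sum_congr rfl fun x hx => ?_
          have hx' := Finset.HasAntidiagonal.mem_antidiagonal.mp hx
          rw [ihq x.1 (by omega), ih x.2 (by omega)]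
          simp [Ee, PowerSeries.coeff_mk]
      rw [aseq_rec, eseq_rec]
      refine Finset.sum_congr rfl fun x hx => ?_
      have hx' := Finset.HasAntidiagonal.mem_antidiagonal.mp hx
      rw [hb p x.1 (by omega), ih x.2 (by omega)]

end HookTree

end HookProof

/-- **Corollary (x = 0 in Theorem 1.1).**  For `m ≥ 2` and `n ≥ 1`,
`∑_{T ∈ 𝒯_{n,m}} ∏_{v ∈ 𝓘(T)} 1/𝓗_v = (m^n/(mn+1)) ⬝ C((mn+1)/m, n)`, where
`C(y,n) = y(y-1)⋯(y-n+1)/n!`. -/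
theorem hook_length_corollary_inv (m n : ℕ) (hm : 2 ≤ m) (hn : 1 ≤ n) :
    (∑ᶠ T ∈ {T : MTree m | T.internals = n},
        MTree.hookProd1 (fun h => ((h : ℚ))⁻¹) T)
      = (m : ℚ) ^ n * ((m : ℚ) * n + 1)⁻¹ * (n.factorial : ℚ)⁻¹ *
          ∏ j ∈ Finset.range n, (((m : ℚ) * n + 1) / (m : ℚ) - (j : ℚ)) := by
  obtain ⟨p, rfl⟩ : ∃ p, m = p + 1 := ⟨m - 1, by omega⟩
  have hfin : {T : MTree (p + 1) | T.internals = n} = ↑(HookTree.Tset (p + 1) n) := by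
    ext T
    simp [HookTree.mem_Tset]
  rw [hfin, finsum_mem_coe_finset]
  have h1 : ∑ T ∈ HookTree.Tset (p + 1) n, MTree.hookProd1 (fun h => ((h : ℚ))⁻¹) T
      = HookTree.aseq (p + 1) n := rfl
  rw [h1, HookTree.aseq_eq_eseq p n, eseq]
  set M : ℚ := ((p + 1 : ℕ) : ℚ) with hMdef
  have hM : M ≠ 0 := by positivity
  have hMi : M⁻¹ ≠ 0 := inv_ne_zero hM
  have hfac : ((n.factorial : ℚ)) ≠ 0 := by exact_mod_cast n.factorial_ne_zero
  have hMn : M * n + 1 ≠ 0 := by positivity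
  have step2 : ∀ nn : ℕ, (∏ j ∈ Finset.range nn, (M⁻¹ + (j : ℚ) + 1)) * M⁻¹
      = (∏ k ∈ Finset.range nn, (M⁻¹ + k)) * (M⁻¹ + nn) := by
    intro nn
    induction nn with
    | zero => simp
    | succ nn ihn =>
      rw [Finset.prod_range_succ, Finset.prod_range_succ]
      push_cast
      push_cast at ihn
      linear_combination (M⁻¹ + nn + 1) * ihn
  have key : (∏ j ∈ Finset.range n, ((M * n + 1) / M - (j : ℚ)))
      = (M * n + 1) * ∏ k ∈ Finset.range n, (M⁻¹ + k) := by
    have step1 : (∏ j ∈ Finset.range n, ((M * n + 1) / M - (j : ℚ)))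
        = ∏ j ∈ Finset.range n, (M⁻¹ + ((n - 1 - j : ℕ) : ℚ) + 1) := by
      refine Finset.prod_congr rfl fun j hj => ?_
      have hj' := Finset.mem_range.mp hj
      have hcast : ((n - 1 - j : ℕ) : ℚ) = (n : ℚ) - 1 - j := by
        have h' : n - 1 - j = n - (1 + j) := by omega
        rw [h', Nat.cast_sub (by omega : 1 + j ≤ n)]
        push_cast
        ring
      rw [hcast]
      field_simp
      ring
    rw [step1, Finset.prod_range_reflect (fun j => M⁻¹ + (j : ℚ) + 1) n]
    calc (∏ j ∈ Finset.range n, (M⁻¹ + (j : ℚ) + 1))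
        = ((∏ j ∈ Finset.range n, (M⁻¹ + (j : ℚ) + 1)) * M⁻¹) * M := by
          rw [mul_assoc, inv_mul_cancel₀ hM, mul_one]
      _ = ((∏ k ∈ Finset.range n, (M⁻¹ + k)) * (M⁻¹ + n)) * M := by rw [step2]
      _ = (M * n + 1) * ∏ k ∈ Finset.range n, (M⁻¹ + k) := by
          rw [mul_assoc, add_mul, inv_mul_cancel₀ hM]
          ring
  rw [key]
  field_simp
end

section
/- For any integers m ≥ 2 and n ≥ 1, the sum over all complete m-ary trees T with n internal vertices of the product over all internal vertices v of T of (m − 1/𝓗_v) equals (m−1)^n · (mn+1)^{n−1} / n!. -/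
open Polynomial Finset

noncomputable def abP (z : ℚ) : ℕ → ℚ[X]
  | 0 => 1
  | (k+1) => X * (X + C ((k+1 : ℕ) * z)) ^ k

lemma abP_zero (z : ℚ) : abP z 0 = 1 := rfl
lemma abP_succ (z : ℚ) (k : ℕ) : abP z (k+1) = X * (X + C ((k+1 : ℕ) * z)) ^ k := rfl

lemma derivAb (z : ℚ) (k : ℕ) :
    derivative (abP z (k+1)) = (k+1 : ℚ) • ((abP z k).comp (X + C z)) := by
  cases k with
  | zero => simp [abP]
  | succ j =>
    show derivative (X * (X + C ((j+2 : ℕ) * z)) ^ (j+1)) = _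
    rw [derivative_mul, derivative_X, one_mul, derivative_pow, derivative_add,
      derivative_X, derivative_C, add_zero, mul_one]
    show _ = (((((j+1:ℕ)):ℚ))+1) • ((X * (X + C ((j+1 : ℕ) * z)) ^ j).comp (X + C z))
    rw [mul_comp, X_comp, pow_comp, add_comp, X_comp, C_comp, smul_eq_C_mul]
    push_cast
    simp only [C_add, C_mul, C_1, map_ofNat, pow_succ]
    ring

lemma abP_eval_zero (z : ℚ) (k : ℕ) (hk : 1 ≤ k) : (abP z k).eval 0 = 0 := by
  obtain ⟨j, rfl⟩ := Nat.exists_eq_add_of_le hk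
  rw [add_comm, abP_succ]
  simp

lemma poly_ext_of_deriv {p q : ℚ[X]} (h : derivative p = derivative q)
    (h0 : p.eval 0 = q.eval 0) : p = q := by
  have hd : derivative (p - q) = 0 := by rw [derivative_sub, h, sub_self]
  have := Polynomial.eq_C_of_derivative_eq_zero hd
  have h2 : (p - q).coeff 0 = 0 := by
    rw [Polynomial.coeff_zero_eq_eval_zero, eval_sub, h0, sub_self]
  rw [h2, map_zero] at this
  exact sub_eq_zero.mp this

theorem abelBinom (z : ℚ) : ∀ (n : ℕ) (y : ℚ),
    (∑ k ∈ range (n+1), ((n.choose k : ℚ)) • (abP z k * C ((abP z (n-k)).eval y)))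
      = (abP z n).comp (X + C y) := by
  intro n
  induction n with
  | zero => intro y; simp [abP_zero]
  | succ n ih =>
    intro y
    apply poly_ext_of_deriv
    · rw [derivative_sum, Finset.sum_range_succ']
      have h0term : derivative ((((n+1).choose 0 : ℕ) : ℚ) •
          (abP z 0 * C ((abP z (n+1-0)).eval y))) = 0 := by
        simp [abP_zero]
      rw [h0term, add_zero]
      have hterm : ∀ i ∈ range (n+1),
          derivative (((((n+1).choose (i+1) : ℕ)) : ℚ) • (abP z (i+1) * C ((abP z (n+1-(i+1))).eval y)))
          = ((n:ℚ)+1) • ((((n.choose i : ℕ) : ℚ)) •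
              (abP z i * C ((abP z (n-i)).eval y))).comp (X + C z) := by
        intro i hi
        rw [derivative_smul, derivative_mul, derivative_C, mul_zero, add_zero, derivAb,
          smul_comp, mul_comp, C_comp, smul_mul_assoc, smul_smul, smul_smul]
        congr 1
        · exact_mod_cast (Nat.add_one_mul_choose_eq n i).symm
        · rw [Nat.succ_sub_succ]
      rw [Finset.sum_congr rfl hterm, ← Finset.smul_sum, ← Polynomial.sum_comp, ih y,
        comp_assoc, add_comp, X_comp, C_comp]
      rw [derivative_comp, derivAb]
      simp only [derivative_add, derivative_X, derivative_C, add_zero, one_mul]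
      rw [smul_comp, comp_assoc, add_comp, X_comp, C_comp]
      rw [add_assoc, add_assoc, add_comm (C y) (C z)]
    · rw [eval_finset_sum]
      rw [Finset.sum_range_succ']
      have : ∀ i ∈ range (n+1),
          eval 0 (((((n+1).choose (i+1) : ℕ)) : ℚ) • (abP z (i+1) * C ((abP z (n+1-(i+1))).eval y))) = 0 := by
        intro i hi
        rw [eval_smul, eval_mul, abP_eval_zero z (i+1) (Nat.le_add_left 1 i)]
        simp
      rw [Finset.sum_congr rfl this, Finset.sum_const, smul_zero, zero_add]
      simp [abP_zero, eval_comp]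

noncomputable def phi (m k : ℕ) (x : ℚ) : ℚ :=
  ((m:ℚ)-1)^k * (abP (m:ℚ) k).eval x / (k.factorial : ℚ)

lemma phi_zero (m : ℕ) (x : ℚ) : phi m 0 x = 1 := by
  simp [phi, abP_zero]

lemma phi_succ (m k : ℕ) (x : ℚ) :
    phi m (k+1) x = ((m:ℚ)-1)^(k+1) * (x * (x + ((k:ℚ)+1) * m)^k) / ((k+1).factorial : ℚ) := by
  rw [phi, abP_succ]
  push_cast
  simp [eval_pow]

lemma phi_succ_zero (m k : ℕ) : phi m (k+1) 0 = 0 := by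
  rw [phi_succ]; simp

lemma phi_binom (m k : ℕ) (x y : ℚ) :
    phi m k (x + y) = ∑ j ∈ range (k+1), phi m j x * phi m (k-j) y := by
  have h := congrArg (eval x) (abelBinom (m:ℚ) k y)
  rw [eval_comp] at h
  simp only [eval_add, eval_X, eval_C] at h
  rw [eval_finset_sum] at h
  simp only [eval_smul, eval_mul, eval_C, smul_eq_mul] at h
  rw [phi, ← h, Finset.mul_sum, Finset.sum_div]
  refine Finset.sum_congr rfl fun j hj => ?_
  have hjk : j ≤ k := Nat.lt_succ_iff.mp (Finset.mem_range.mp hj)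
  rw [phi, phi, Nat.cast_choose ℚ hjk]
  have h1 : ((j.factorial : ℚ)) ≠ 0 := Nat.cast_ne_zero.mpr (Nat.factorial_ne_zero j)
  have h2 : (((k-j).factorial : ℚ)) ≠ 0 := Nat.cast_ne_zero.mpr (Nat.factorial_ne_zero (k-j))
  have h3 : ((k.factorial : ℚ)) ≠ 0 := Nat.cast_ne_zero.mpr (Nat.factorial_ne_zero k)
  have hpow : ((m:ℚ)-1)^k = ((m:ℚ)-1)^j * ((m:ℚ)-1)^(k-j) := by
    rw [← pow_add, Nat.add_sub_cancel' hjk]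
  rw [hpow]
  field_simp

lemma key1 (m b : ℕ) (hm : 2 ≤ m) :
    ((m:ℚ) - ((1 + b : ℕ):ℚ)⁻¹) * phi m b ((m:ℚ)-1) = - phi m (b+1) (-1) := by
  have hm1 : ((m:ℚ)-1) ≠ 0 := by
    have : (2:ℚ) ≤ (m:ℚ) := by exact_mod_cast hm
    linarith
  cases b with
  | zero =>
    rw [phi_zero, phi_succ]
    push_cast
    norm_num
  | succ c =>
    rw [phi_succ, phi_succ]
    have hc1 : ((c:ℚ)+1) ≠ 0 := by positivity
    have hc2 : ((c:ℚ)+2) ≠ 0 := by positivity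
    have hfac1 : (((c+1).factorial : ℚ)) ≠ 0 := Nat.cast_ne_zero.mpr (Nat.factorial_ne_zero _)
    have hfac2 : (((c+1+1).factorial : ℚ)) ≠ 0 := Nat.cast_ne_zero.mpr (Nat.factorial_ne_zero _)
    have hfs : (((c+1+1).factorial : ℚ)) = ((c:ℚ)+2) * ((c+1).factorial : ℚ) := by
      rw [Nat.factorial_succ]
      push_cast
      ring
    have hw : ((m:ℚ)-1) + ((c:ℚ)+1)*m = ((c:ℚ)+1+1)*m - 1 := by ring
    have hpow : (-1 + ((c:ℚ)+1+1)*m) ^ (c+1)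
        = (((c:ℚ)+1+1)*m - 1) ^ c * (((c:ℚ)+1+1)*m - 1) := by
      rw [← pow_succ]
      ring_nf
    push_cast
    rw [hw, hpow, hfs]
    have hcast : ((1:ℚ) + ((c:ℚ)+1)) = ((c:ℚ)+2) := by ring
    rw [hcast]
    field_simp
    ring

lemma key2 (m n : ℕ) (hm : 2 ≤ m) :
    ∑ p ∈ antidiagonal n,
        ((m:ℚ) - ((1 + p.2 : ℕ):ℚ)⁻¹) * (phi m p.1 1 * phi m p.2 ((m:ℚ)-1))
      = phi m (n+1) 1 := by
  have step : ∀ p ∈ antidiagonal n,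
      ((m:ℚ) - ((1 + p.2 : ℕ):ℚ)⁻¹) * (phi m p.1 1 * phi m p.2 ((m:ℚ)-1))
        = -(phi m p.1 1 * phi m (p.2+1) (-1)) := by
    intro p _
    have := key1 m p.2 hm
    calc ((m:ℚ) - ((1 + p.2 : ℕ):ℚ)⁻¹) * (phi m p.1 1 * phi m p.2 ((m:ℚ)-1))
        = phi m p.1 1 * (((m:ℚ) - ((1 + p.2 : ℕ):ℚ)⁻¹) * phi m p.2 ((m:ℚ)-1)) := by ring
      _ = phi m p.1 1 * (- phi m (p.2+1) (-1)) := by rw [this]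
      _ = -(phi m p.1 1 * phi m (p.2+1) (-1)) := by ring
  rw [Finset.sum_congr rfl step, Finset.sum_neg_distrib]
  rw [Finset.Nat.sum_antidiagonal_eq_sum_range_succ_mk]
  have hrefl : ∑ k ∈ range (n+1), phi m k 1 * phi m (n - k + 1) (-1)
      = ∑ k ∈ range (n+1), phi m (n - k) 1 * phi m (k+1) (-1) := by
    rw [← Finset.sum_range_reflect]
    refine Finset.sum_congr rfl fun k hk => ?_
    have hk' : k ≤ n := Nat.lt_succ_iff.mp (Finset.mem_range.mp hk)
    have e1 : n+1-1-k = n-k := by omega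
    rw [e1, Nat.sub_sub_self hk']
  rw [hrefl]
  have hb := phi_binom m (n+1) (-1) 1
  rw [neg_add_cancel, Finset.sum_range_succ'] at hb
  rw [phi_succ_zero] at hb
  simp only [Nat.sub_zero, phi_zero, one_mul] at hb
  -- hb : 0 = ∑ i ∈ range (n+1), phi m (i+1) (-1) * phi m (n+1-(i+1)) 1 + phi m (n+1) 1
  have : ∑ k ∈ range (n+1), phi m (n - k) 1 * phi m (k+1) (-1)
      = ∑ i ∈ range (n+1), phi m (i+1) (-1) * phi m (n+1-(i+1)) 1 := by
    refine Finset.sum_congr rfl fun k hk => ?_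
    rw [Nat.succ_sub_succ]
    ring
  rw [this]
  linarith [hb]

lemma sum_antidiagonalTuple_snoc {M : Type*} [AddCommMonoid M] (r j : ℕ)
    (g : (Fin (r+1) → ℕ) → M) :
    ∑ k ∈ Finset.Nat.antidiagonalTuple (r+1) j, g k
      = ∑ p ∈ antidiagonal j, ∑ k ∈ Finset.Nat.antidiagonalTuple r p.2,
          g (Fin.snoc k p.1) := by
  have hs := Finset.sum_sigma (antidiagonal j)
    (fun p => Finset.Nat.antidiagonalTuple r p.2)
    (fun x => g (Fin.snoc x.2 x.1.1))
  rw [← hs]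
  refine Finset.sum_nbij' (fun k => ⟨(k (Fin.last r), ∑ i : Fin r, k i.castSucc), Fin.init k⟩)
    (fun pk => Fin.snoc pk.2 pk.1.1) ?_ ?_ ?_ ?_ ?_
  · intro k hk
    rw [Finset.Nat.mem_antidiagonalTuple, Fin.sum_univ_castSucc] at hk
    simp only [Finset.mem_sigma, Finset.Nat.mem_antidiagonalTuple, Finset.HasAntidiagonal.mem_antidiagonal]
    refine ⟨by omega, ?_⟩
    rfl
  · intro pk hpk
    simp only [Finset.mem_sigma, Finset.Nat.mem_antidiagonalTuple,
      Finset.HasAntidiagonal.mem_antidiagonal] at hpk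
    rw [Finset.Nat.mem_antidiagonalTuple, Fin.sum_univ_castSucc]
    simp only [Fin.snoc_castSucc, Fin.snoc_last]
    omega
  · intro k hk
    exact Fin.snoc_init_self k
  · intro pk hpk
    simp only [Finset.mem_sigma, Finset.Nat.mem_antidiagonalTuple,
      Finset.HasAntidiagonal.mem_antidiagonal] at hpk
    have h1 : (Fin.snoc pk.2 pk.1.1 : Fin (r+1) → ℕ) (Fin.last r) = pk.1.1 := by simp
    have h2 : Fin.init (Fin.snoc pk.2 pk.1.1 : Fin (r+1) → ℕ) = pk.2 := by simp
    have h3 : ∑ i : Fin r, (Fin.snoc pk.2 pk.1.1 : Fin (r+1) → ℕ) i.castSucc = pk.1.2 := by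
      simp only [Fin.snoc_castSucc]
      exact hpk.2
    obtain ⟨⟨a, b⟩, k⟩ := pk
    simp only at h1 h2 h3 ⊢
    rw [h1, h2, h3]
  · intro k hk
    have : Fin.snoc (Fin.init k) (k (Fin.last r)) = k := Fin.snoc_init_self k
    exact congrArg g this.symm

noncomputable def Gphi (m : ℕ) : ℕ → ℕ → ℚ := fun r j =>
  ∑ k ∈ Finset.Nat.antidiagonalTuple r j, ∏ i, phi m (k i) 1

lemma Gphi_eq (m : ℕ) (r j : ℕ) : Gphi m r j = phi m j (r : ℚ) := by
  induction r generalizing j with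
  | zero =>
    cases j with
    | zero => simp [Gphi, phi_zero]
    | succ i =>
      simp [Gphi, show Finset.Nat.antidiagonalTuple 0 (i+1) = ∅ from rfl, phi_succ_zero]
  | succ r ih =>
    rw [Gphi, sum_antidiagonalTuple_snoc]
    have inner : ∀ p ∈ antidiagonal j,
        (∑ k ∈ Finset.Nat.antidiagonalTuple r p.2, ∏ i : Fin (r+1), phi m ((Fin.snoc k p.1 : Fin (r+1) → ℕ) i) 1)
          = phi m p.1 1 * phi m p.2 (r : ℚ) := by
      intro p _
      have : ∀ k : Fin r → ℕ, (∏ i : Fin (r+1), phi m ((Fin.snoc k p.1 : Fin (r+1) → ℕ) i) 1)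
          = phi m p.1 1 * ∏ i : Fin r, phi m (k i) 1 := by
        intro k
        rw [Fin.prod_univ_castSucc]
        simp only [Fin.snoc_castSucc, Fin.snoc_last]
        ring
      rw [Finset.sum_congr rfl fun k _ => this k, ← Finset.mul_sum, ← Gphi, ih]
    rw [Finset.sum_congr rfl inner, Finset.Nat.sum_antidiagonal_eq_sum_range_succ_mk]
    have := phi_binom m j 1 (r : ℚ)
    push_cast
    rw [add_comm (r:ℚ) 1, ← this]

namespace MTree

variable {m : ℕ}

def decEq : (a b : MTree m) → Decidable (a = b)
  | leaf, leaf => isTrue rfl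
  | leaf, node _ => isFalse (fun h => by cases h)
  | node _, leaf => isFalse (fun h => by cases h)
  | node c, node d =>
    have H : ∀ i, Decidable (c i = d i) := fun i => decEq (c i) (d i)
    decidable_of_iff (∀ i, c i = d i)
      ⟨fun h => by rw [funext h], fun h i => by injection h with h'; rw [h']⟩

instance : DecidableEq (MTree m) := decEq

noncomputable def allUpTo (m : ℕ) : ℕ → Finset (MTree m)
  | 0 => {leaf}
  | (n+1) => {leaf} ∪ (Fintype.piFinset (fun _ : Fin m => allUpTo m n)).image node

lemma mem_allUpTo (T : MTree m) : ∀ n, T.internals ≤ n → T ∈ allUpTo m n := by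
  induction T with
  | leaf =>
    intro n _
    cases n with
    | zero => simp [allUpTo]
    | succ n => simp [allUpTo]
  | node c ih =>
    intro n hn
    have h1 : internals (node c) = 1 + ∑ i, (c i).internals := rfl
    cases n with
    | zero => omega
    | succ n =>
      rw [allUpTo]
      refine Finset.mem_union_right _ (Finset.mem_image.mpr ⟨c, ?_, rfl⟩)
      rw [Fintype.mem_piFinset]
      intro i
      refine ih i n ?_
      have h2 : (c i).internals ≤ ∑ j, (c j).internals :=
        Finset.single_le_sum (f := fun j => (c j).internals)
          (fun j _ => Nat.zero_le _) (Finset.mem_univ i)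
      omega

noncomputable def treesF (m n : ℕ) : Finset (MTree m) :=
  (allUpTo m n).filter (fun T => T.internals = n)

lemma mem_treesF {n : ℕ} {T : MTree m} : T ∈ treesF m n ↔ T.internals = n :=
  ⟨fun h => (Finset.mem_filter.mp h).2,
   fun h => Finset.mem_filter.mpr ⟨mem_allUpTo T n h.le, h⟩⟩

lemma treesF_zero : treesF m 0 = {leaf} := by
  ext T
  rw [mem_treesF, Finset.mem_singleton]
  constructor
  · intro h
    cases T with
    | leaf => rfl
    | node c =>
      exfalso
      have : internals (node c) = 1 + ∑ i, (c i).internals := rfl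
      omega
  · rintro rfl; rfl

lemma treesF_succ_eq_image (n : ℕ) :
    treesF m (n+1) = ((Fintype.piFinset (fun _ : Fin m => allUpTo m n)).filter
      (fun c => ∑ i, (c i).internals = n)).image node := by
  ext T
  rw [mem_treesF, Finset.mem_image]
  constructor
  · intro h
    cases T with
    | leaf => exact absurd h (by rw [show (leaf : MTree m).internals = 0 from rfl]; omega)
    | node c =>
      refine ⟨c, Finset.mem_filter.mpr ⟨?_, ?_⟩, rfl⟩
      · rw [Fintype.mem_piFinset]
        intro i
        have h1 : internals (node c) = 1 + ∑ i, (c i).internals := rfl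
        have h2 : (c i).internals ≤ ∑ j, (c j).internals :=
          Finset.single_le_sum (f := fun j => (c j).internals)
            (fun j _ => Nat.zero_le _) (Finset.mem_univ i)
        exact mem_allUpTo _ _ (by omega)
      · have h1 : internals (node c) = 1 + ∑ i, (c i).internals := rfl
        omega
  · rintro ⟨c, hc, rfl⟩
    have h1 : internals (node c) = 1 + ∑ i, (c i).internals := rfl
    have h2 := (Finset.mem_filter.mp hc).2
    omega

lemma fiber_eq (n : ℕ) (k : Fin m → ℕ) (hk : k ∈ Finset.Nat.antidiagonalTuple m n) :
    (((Fintype.piFinset (fun _ : Fin m => allUpTo m n)).filter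
        (fun c => ∑ i, (c i).internals = n)).filter
          (fun c => (fun i => (c i).internals) = k))
      = Fintype.piFinset (fun i => treesF m (k i)) := by
  rw [Finset.Nat.mem_antidiagonalTuple] at hk
  ext c
  simp only [Finset.mem_filter, Fintype.mem_piFinset, mem_treesF]
  constructor
  · rintro ⟨⟨_, _⟩, heq⟩ i
    exact congrFun heq i
  · intro h
    have hki : ∀ i, k i ≤ n := fun i => by
      have := Finset.single_le_sum (f := k) (fun j _ => Nat.zero_le _) (Finset.mem_univ i)
      omega
    refine ⟨⟨fun i => mem_allUpTo _ _ (by rw [h i]; exact hki i), ?_⟩, funext h⟩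
    rw [Finset.sum_congr rfl (fun i _ => h i)]
    exact hk

lemma sum_treesF_succ (f : ℕ → ℚ) (n : ℕ) :
    ∑ T ∈ treesF m (n+1), hookProd1 f T
      = ∑ k ∈ Finset.Nat.antidiagonalTuple m n,
          f (1 + ∑ i ∈ Finset.univ.filter (fun i : Fin m => (i:ℕ)+1 < m), k i)
            * ∏ i, (∑ T ∈ treesF m (k i), hookProd1 f T) := by
  rw [treesF_succ_eq_image, Finset.sum_image (fun x _ y _ h => by injection h)]
  set S := ((Fintype.piFinset (fun _ : Fin m => allUpTo m n)).filter
      (fun c => ∑ i, (c i).internals = n)) with hS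
  have hmaps : ∀ c ∈ S, (fun i => (c i).internals) ∈ Finset.Nat.antidiagonalTuple m n := by
    intro c hc
    rw [Finset.Nat.mem_antidiagonalTuple]
    exact (Finset.mem_filter.mp hc).2
  rw [← Finset.sum_fiberwise_of_maps_to hmaps (fun c => hookProd1 f (node c))]
  refine Finset.sum_congr rfl fun k hk => ?_
  rw [fiber_eq n k hk]
  have hterm : ∀ c ∈ Fintype.piFinset (fun i => treesF m (k i)),
      hookProd1 f (node c)
        = f (1 + ∑ i ∈ Finset.univ.filter (fun i : Fin m => (i:ℕ)+1 < m), k i)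
            * ∏ i, hookProd1 f (c i) := by
    intro c hc
    rw [Fintype.mem_piFinset] at hc
    have hint : ∀ i, (c i).internals = k i := fun i => mem_treesF.mp (hc i)
    have : hookProd1 f (node c) = f (hook1 c) * ∏ i, hookProd1 f (c i) := rfl
    rw [this, hook1, Finset.sum_congr rfl (fun i _ => hint i)]
  rw [Finset.sum_congr rfl hterm, ← Finset.mul_sum, ← Finset.prod_univ_sum]

lemma filter_sum_castSucc (r : ℕ) (k : Fin (r+1) → ℕ) :
    ∑ i ∈ Finset.univ.filter (fun i : Fin (r+1) => (i:ℕ)+1 < r+1), k i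
      = ∑ i : Fin r, k i.castSucc := by
  have hset : Finset.univ.filter (fun i : Fin (r+1) => (i:ℕ)+1 < r+1)
      = Finset.map Fin.castSuccEmb Finset.univ := by
    ext i
    simp only [Finset.mem_filter, Finset.mem_univ, true_and, Finset.mem_map]
    constructor
    · intro h
      exact ⟨⟨i.val, by omega⟩, rfl⟩
    · rintro ⟨j, rfl⟩
      have : (Fin.castSuccEmb j : Fin (r+1)).val = j.val := rfl
      omega
  rw [hset, Finset.sum_map]
  rfl



end MTree

namespace MTree

lemma Fc_eq (m : ℕ) (hm : 2 ≤ m) : ∀ n,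
    (∑ T ∈ treesF m n, hookProd1 (fun h => (m:ℚ) - ((h:ℚ))⁻¹) T) = phi m n 1 := by
  intro n
  induction n using Nat.strong_induction_on with
  | _ n ih =>
    match n with
    | 0 =>
      rw [treesF_zero, Finset.sum_singleton, phi_zero]
      rfl
    | (n+1) =>
      obtain ⟨r, rfl⟩ : ∃ r, m = r + 1 := ⟨m - 1, by omega⟩
      set f : ℕ → ℚ := fun h => ((r+1 : ℕ):ℚ) - ((h:ℚ))⁻¹ with hf
      rw [sum_treesF_succ]
      have hstep : ∀ k ∈ Finset.Nat.antidiagonalTuple (r+1) n,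
          f (1 + ∑ i ∈ Finset.univ.filter (fun i : Fin (r+1) => (i:ℕ)+1 < r+1), k i)
              * ∏ i, (∑ T ∈ treesF (r+1) (k i), hookProd1 f T)
            = f (1 + ∑ i ∈ Finset.univ.filter (fun i : Fin (r+1) => (i:ℕ)+1 < r+1), k i)
              * ∏ i, phi (r+1) (k i) 1 := by
        intro k hk
        rw [Finset.Nat.mem_antidiagonalTuple] at hk
        congr 1
        refine Finset.prod_congr rfl fun i _ => ?_
        refine ih (k i) ?_
        have := Finset.single_le_sum (f := k) (fun j _ => Nat.zero_le _) (Finset.mem_univ i)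
        omega
      rw [Finset.sum_congr rfl hstep]
      rw [sum_antidiagonalTuple_snoc r n (fun k =>
        f (1 + ∑ i ∈ Finset.univ.filter (fun i : Fin (r+1) => (i:ℕ)+1 < r+1), k i)
          * ∏ i, phi (r+1) (k i) 1)]
      have hinner : ∀ p ∈ antidiagonal n,
          (∑ k ∈ Finset.Nat.antidiagonalTuple r p.2,
            f (1 + ∑ i ∈ Finset.univ.filter (fun i : Fin (r+1) => (i:ℕ)+1 < r+1),
                (Fin.snoc k p.1 : Fin (r+1) → ℕ) i)
              * ∏ i, phi (r+1) ((Fin.snoc k p.1 : Fin (r+1) → ℕ) i) 1)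
            = ((r+1 : ℚ) - ((1 + p.2 : ℕ):ℚ)⁻¹) * (phi (r+1) p.1 1 * phi (r+1) p.2 ((r:ℚ)+1-1)) := by
        intro p hp
        have hsum : ∀ k ∈ Finset.Nat.antidiagonalTuple r p.2,
            f (1 + ∑ i ∈ Finset.univ.filter (fun i : Fin (r+1) => (i:ℕ)+1 < r+1),
                (Fin.snoc k p.1 : Fin (r+1) → ℕ) i)
              * ∏ i, phi (r+1) ((Fin.snoc k p.1 : Fin (r+1) → ℕ) i) 1
            = f (1 + p.2) * (phi (r+1) p.1 1 * ∏ i : Fin r, phi (r+1) (k i) 1) := by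
          intro k hk
          rw [Finset.Nat.mem_antidiagonalTuple] at hk
          have h1 : ∑ i ∈ Finset.univ.filter (fun i : Fin (r+1) => (i:ℕ)+1 < r+1),
              (Fin.snoc k p.1 : Fin (r+1) → ℕ) i = p.2 := by
            rw [filter_sum_castSucc]
            simp only [Fin.snoc_castSucc]
            exact hk
          rw [h1, Fin.prod_univ_castSucc]
          simp only [Fin.snoc_castSucc, Fin.snoc_last]
          ring
        rw [Finset.sum_congr rfl hsum, ← Finset.mul_sum, ← Finset.mul_sum, ← Gphi, Gphi_eq]
        have hc : ((r:ℚ)+1-1) = (r:ℚ) := by ring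
        rw [hc, hf]
        push_cast
        ring
      rw [Finset.sum_congr rfl hinner]
      have := key2 (r+1) n hm
      have hc2 : ((r+1 : ℕ):ℚ) - 1 = (r:ℚ)+1-1 := by push_cast; ring
      rw [hc2] at this
      have hc3 : ((r+1 : ℕ):ℚ) = (r:ℚ)+1 := by push_cast; ring
      rw [hc3] at this
      exact this

lemma setOf_eq_treesF (m n : ℕ) :
    {T : MTree m | T.internals = n} = ↑(treesF m n) := by
  ext T
  simp [mem_treesF]

end MTree

/-- **Corollary (x = -m in Theorem 1.1).**  For `m ≥ 2` and `n ≥ 1`,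
`∑_{T ∈ 𝒯_{n,m}} ∏_{v ∈ 𝓘(T)} (m - 1/𝓗_v) = (m-1)^n (mn+1)^{n-1} / n!`. -/
theorem hook_length_corollary_m_sub_inv (m n : ℕ) (hm : 2 ≤ m) (hn : 1 ≤ n) :
    (∑ᶠ T ∈ {T : MTree m | T.internals = n},
        MTree.hookProd1 (fun h => (m : ℚ) - ((h : ℚ))⁻¹) T)
      = ((m : ℚ) - 1) ^ n * ((m : ℚ) * n + 1) ^ (n - 1) / (n.factorial : ℚ) := by
    obtain ⟨n', rfl⟩ : ∃ n', n = n' + 1 := ⟨n - 1, by omega⟩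
    rw [MTree.setOf_eq_treesF, finsum_mem_coe_finset, MTree.Fc_eq m hm (n'+1), phi_succ]
    have hfac : (((n'+1).factorial : ℕ) : ℚ) ≠ 0 := Nat.cast_ne_zero.mpr (Nat.factorial_ne_zero _)
    rw [Nat.add_sub_cancel]
    push_cast
    ring_nf
end
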